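/- arXiv:2010.11207 — 3 statements merged into one kernel-verified Lean document; each statement's English description precedes it below -/
import Mathlib

section
/- There exists a constant C ≥ 1 depending only on m, c, C₀ such that every function π : I → ℝ with π_x ≥ 0 for all x ∈ I and satisfying Σ_{x∈I} π_x·(ℒφ)_x = 0 for every function φ : I → ℝ obeys sup_{x∈I} π_x ≤ C·inf_{x∈I} π_x. Moreover, there exists such an invariant function π with π_x ≥ 0, Σ_{x∈I} π_x = N+1, and C^{−1} ≤ π_x ≤ C for all x ∈ I. -/
open scoped BigOperators

/-- Long-range Neumann generator `ℒ` acting on `ℤ`-indexed functions; for `x` in the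
bulk `m ≤ x ≤ N − m` it is the long-range Laplacian, and near the two boundaries the
jumps are clamped to stay inside `I = {0,…,N}`. -/
noncomputable def Lact (N m : ℕ) (α : ℕ → ℝ) (φ : ℤ → ℝ) (x : ℤ) : ℝ :=
  if (m : ℤ) ≤ x ∧ x ≤ (N : ℤ) - (m : ℤ) then
    ((N : ℝ) ^ 2 / 2) * ∑ k ∈ Finset.Icc 1 m, α k * (φ (x + k) + φ (x - k) - 2 * φ x)
  else if 0 ≤ x ∧ x ≤ (m : ℤ) - 1 then
    ((N : ℝ) ^ 2 / 2) * ∑ k ∈ Finset.Icc 1 m,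
      α k * ((φ (x + k) - φ x) + (φ (x - min (k : ℤ) x) - φ x))
  else
    ((N : ℝ) ^ 2 / 2) * ∑ k ∈ Finset.Icc 1 m,
      α k * ((φ (x - k) - φ x) + (φ (x + min (k : ℤ) ((N : ℤ) - x)) - φ x))

/-- target of jump 1 -/
def jA (N m : ℕ) (x : ℤ) (k : ℕ) : ℤ :=
  if (m : ℤ) ≤ x ∧ x ≤ (N : ℤ) - (m : ℤ) then x + k
  else if 0 ≤ x ∧ x ≤ (m : ℤ) - 1 then x + k
  else x - k

/-- target of jump 2 -/
def jB (N m : ℕ) (x : ℤ) (k : ℕ) : ℤ :=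
  if (m : ℤ) ≤ x ∧ x ≤ (N : ℤ) - (m : ℤ) then x - k
  else if 0 ≤ x ∧ x ≤ (m : ℤ) - 1 then x - min (k : ℤ) x
  else x + min (k : ℤ) ((N : ℤ) - x)

lemma Lact_apply (N m : ℕ) (α : ℕ → ℝ) (φ : ℤ → ℝ) (x : ℤ) :
    Lact N m α φ x = ((N : ℝ) ^ 2 / 2) *
      ∑ k ∈ Finset.Icc 1 m, α k * (φ (jA N m x k) + φ (jB N m x k) - 2 * φ x) := by
  by_cases h1 : (m : ℤ) ≤ x ∧ x ≤ (N : ℤ) - (m : ℤ)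
  · simp only [Lact, jA, jB, if_pos h1]
  · by_cases h2 : (0:ℤ) ≤ x ∧ x ≤ (m : ℤ) - 1
    · simp only [Lact, jA, jB, if_neg h1, if_pos h2]
      congr 1
      refine Finset.sum_congr rfl fun k _ => by ring
    · simp only [Lact, jA, jB, if_neg h1, if_neg h2]
      congr 1
      refine Finset.sum_congr rfl fun k _ => by ring

lemma jmem (N m : ℕ) (hmN : 2 * m ≤ N) {x : ℤ} (hx : x ∈ Finset.Icc (0:ℤ) (N:ℤ))
    {k : ℕ} (hk : k ∈ Finset.Icc 1 m) :
    jA N m x k ∈ Finset.Icc (0:ℤ) (N:ℤ) ∧ jB N m x k ∈ Finset.Icc (0:ℤ) (N:ℤ) := by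
  simp only [Finset.mem_Icc] at hx hk ⊢
  unfold jA jB
  split_ifs <;> constructor <;> constructor <;> omega

noncomputable def Lq (N m : ℕ) (α : ℕ → ℝ) (x y : ℤ) : ℝ :=
  Lact N m α (fun z => if z = y then 1 else 0) x

section Basic

variable (N m : ℕ) (α : ℕ → ℝ) (c C₀ : ℝ)

lemma Lq_offdiag (hα : ∀ k ∈ Finset.Icc 1 m, 0 ≤ α k) {x y : ℤ} (hxy : x ≠ y) :
    0 ≤ Lq N m α x y := by
  rw [Lq, Lact_apply]
  apply mul_nonneg (by positivity)
  apply Finset.sum_nonneg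
  intro k hk
  apply mul_nonneg (hα k hk)
  rw [if_neg hxy]
  split_ifs <;> norm_num

lemma Lq_diag_nonpos (hα : ∀ k ∈ Finset.Icc 1 m, 0 ≤ α k) (y : ℤ) :
    Lq N m α y y ≤ 0 := by
  rw [Lq, Lact_apply]
  apply mul_nonpos_of_nonneg_of_nonpos (by positivity)
  apply Finset.sum_nonpos
  intro k hk
  apply mul_nonpos_of_nonneg_of_nonpos (hα k hk)
  rw [if_pos rfl]
  split_ifs <;> norm_num

lemma Lq_diag_lb (hα : ∀ k ∈ Finset.Icc 1 m, 0 ≤ α k)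
    (hαs : (∑ k ∈ Finset.Icc 1 m, α k) ≤ C₀) (y : ℤ) :
    ((N : ℝ) ^ 2 / 2) * (-2 * C₀) ≤ Lq N m α y y := by
  rw [Lq, Lact_apply]
  apply mul_le_mul_of_nonneg_left _ (by positivity)
  calc (-2 : ℝ) * C₀ ≤ ∑ k ∈ Finset.Icc 1 m, α k * (-2) := by
        rw [← Finset.sum_mul]
        nlinarith [Finset.sum_nonneg hα, hαs]
    _ ≤ _ := by
        apply Finset.sum_le_sum
        intro k hk
        apply mul_le_mul_of_nonneg_left _ (hα k hk)
        rw [if_pos rfl]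
        split_ifs <;> norm_num

lemma Lq_adj (hm : 1 ≤ m) (hmN : 2 * m ≤ N) (hc : 0 < c)
    (hα : ∀ k ∈ Finset.Icc 1 m, 0 ≤ α k) (hα1 : c ≤ α 1)
    {z y : ℤ} (hz : z ∈ Finset.Icc (0:ℤ) (N:ℤ)) (hy : y ∈ Finset.Icc (0:ℤ) (N:ℤ))
    (hadj : z + 1 = y ∨ z - 1 = y) :
    ((N : ℝ) ^ 2 / 2) * c ≤ Lq N m α z y := by
  have hzy : z ≠ y := by omega
  rw [Lq, Lact_apply]
  apply mul_le_mul_of_nonneg_left _ (by positivity)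
  have h1m : 1 ∈ Finset.Icc 1 m := by simp [hm]
  have key : jA N m z 1 = y ∨ jB N m z 1 = y := by
    simp only [Finset.mem_Icc] at hz hy
    unfold jA jB
    split_ifs <;> push_cast <;> omega
  have hterm : c ≤ α 1 * ((if jA N m z 1 = y then (1:ℝ) else 0) +
      (if jB N m z 1 = y then (1:ℝ) else 0) - 2 * (if z = y then (1:ℝ) else 0)) := by
    rw [if_neg hzy]
    rcases key with h | h
    · rw [if_pos h]
      have h2 : (0:ℝ) ≤ (if jB N m z 1 = y then (1:ℝ) else 0) := by positivity
      nlinarith [hα 1 h1m]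
    · rw [if_pos h]
      have h2 : (0:ℝ) ≤ (if jA N m z 1 = y then (1:ℝ) else 0) := by positivity
      nlinarith [hα 1 h1m]
  calc c ≤ α 1 * ((if jA N m z 1 = y then (1:ℝ) else 0) +
      (if jB N m z 1 = y then (1:ℝ) else 0) - 2 * (if z = y then (1:ℝ) else 0)) := hterm
    _ ≤ _ := by
        apply Finset.single_le_sum (f := fun k => α k * ((if jA N m z k = y then (1:ℝ) else 0) +
            (if jB N m z k = y then (1:ℝ) else 0) - 2 * (if z = y then (1:ℝ) else 0))) _ h1m
        intro k hk
        apply mul_nonneg (hα k hk)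
        rw [if_neg hzy]
        split_ifs <;> norm_num

end Basic

noncomputable def kap (c C₀ : ℝ) : ℝ := 2 * C₀ / c + 1

section Harnack

variable {N m : ℕ} {α : ℕ → ℝ} {c C₀ : ℝ} {π : ℤ → ℝ}

lemma kap_ge_one (hc : 0 < c) (hC₀ : 0 < C₀) : 1 ≤ kap c C₀ := by
  have : 0 < 2 * C₀ / c := by positivity
  simp only [kap]; linarith

lemma harnack_adj (hm : 1 ≤ m) (hN : 2 ≤ N) (hmN : 2 * m ≤ N) (hc : 0 < c) (hC₀ : 0 < C₀)
    (hα : ∀ k ∈ Finset.Icc 1 m, 0 ≤ α k) (hα1 : c ≤ α 1)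
    (hαs : (∑ k ∈ Finset.Icc 1 m, α k) ≤ C₀)
    (hπ : ∀ x ∈ Finset.Icc (0:ℤ) (N:ℤ), 0 ≤ π x)
    (hinv : ∀ φ : ℤ → ℝ, ∑ x ∈ Finset.Icc (0:ℤ) (N:ℤ), π x * Lact N m α φ x = 0)
    {z y : ℤ} (hz : z ∈ Finset.Icc (0:ℤ) (N:ℤ)) (hy : y ∈ Finset.Icc (0:ℤ) (N:ℤ))
    (hadj : z + 1 = y ∨ z - 1 = y) :
    π z ≤ kap c C₀ * π y := by
  have hbal : ∑ x ∈ Finset.Icc (0:ℤ) (N:ℤ), π x * Lq N m α x y = 0 :=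
    hinv (fun w => if w = y then 1 else 0)
  have hzy : z ≠ y := by omega
  have hsplit : π y * Lq N m α y y +
      ∑ x ∈ (Finset.Icc (0:ℤ) (N:ℤ)).erase y, π x * Lq N m α x y = 0 := by
    rw [Finset.add_sum_erase _ (fun x => π x * Lq N m α x y) hy]; exact hbal
  have hzin : z ∈ (Finset.Icc (0:ℤ) (N:ℤ)).erase y := Finset.mem_erase.mpr ⟨hzy, hz⟩
  have h1 : π z * Lq N m α z y ≤
      ∑ x ∈ (Finset.Icc (0:ℤ) (N:ℤ)).erase y, π x * Lq N m α x y := by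
    apply Finset.single_le_sum (f := fun x => π x * Lq N m α x y) _ hzin
    intro x hx
    have hx' := Finset.mem_of_mem_erase hx
    exact mul_nonneg (hπ x hx') (Lq_offdiag N m α hα (Finset.mem_erase.mp hx).1)
  have hNpos : (0:ℝ) < (N : ℝ) ^ 2 / 2 := by
    have : (0:ℝ) < (N:ℝ) := by exact_mod_cast Nat.lt_of_lt_of_le Nat.zero_lt_two hN
    positivity
  have h2 : π z * (((N : ℝ) ^ 2 / 2) * c) ≤ π z * Lq N m α z y := by
    apply mul_le_mul_of_nonneg_left _ (hπ z hz)
    exact Lq_adj N m α c hm hmN hc hα hα1 hz hy hadj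
  have h3 : - (π y * Lq N m α y y) ≤ π y * (((N : ℝ) ^ 2 / 2) * (2 * C₀)) := by
    have hd := Lq_diag_lb N m α C₀ hα hαs y
    have hpy := hπ y hy
    nlinarith
  have h4 : π z * (((N : ℝ) ^ 2 / 2) * c) ≤ π y * (((N : ℝ) ^ 2 / 2) * (2 * C₀)) := by
    calc π z * (((N : ℝ) ^ 2 / 2) * c) ≤ π z * Lq N m α z y := h2
      _ ≤ _ := h1
      _ = - (π y * Lq N m α y y) := by linarith
      _ ≤ _ := h3
  have h5 : π z * c ≤ π y * (2 * C₀) := by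
    have := mul_pos hNpos hNpos
    apply le_of_mul_le_mul_right _ hNpos
    calc π z * c * ((N:ℝ)^2/2) = π z * (((N : ℝ) ^ 2 / 2) * c) := by ring
      _ ≤ π y * (((N : ℝ) ^ 2 / 2) * (2 * C₀)) := h4
      _ = π y * (2 * C₀) * ((N:ℝ)^2/2) := by ring
  have h6 : π z ≤ (2 * C₀ / c) * π y := by
    rw [div_mul_eq_mul_div, le_div_iff₀ hc]
    linarith
  have hpy := hπ y hy
  calc π z ≤ (2 * C₀ / c) * π y := h6
    _ ≤ kap c C₀ * π y := by
        apply mul_le_mul_of_nonneg_right _ hpy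
        simp only [kap]; linarith

lemma harnack_chain (hm : 1 ≤ m) (hN : 2 ≤ N) (hmN : 2 * m ≤ N) (hc : 0 < c) (hC₀ : 0 < C₀)
    (hα : ∀ k ∈ Finset.Icc 1 m, 0 ≤ α k) (hα1 : c ≤ α 1)
    (hαs : (∑ k ∈ Finset.Icc 1 m, α k) ≤ C₀)
    (hπ : ∀ x ∈ Finset.Icc (0:ℤ) (N:ℤ), 0 ≤ π x)
    (hinv : ∀ φ : ℤ → ℝ, ∑ x ∈ Finset.Icc (0:ℤ) (N:ℤ), π x * Lact N m α φ x = 0)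
    (d : ℕ) :
    ∀ x ∈ Finset.Icc (0:ℤ) (N:ℤ), ∀ y ∈ Finset.Icc (0:ℤ) (N:ℤ),
      |x - y| ≤ (d : ℤ) → π x ≤ (kap c C₀) ^ d * π y := by
  induction d with
  | zero =>
    intro x hx y hy h
    have : x = y := by
      rcases abs_le.mp h with ⟨h1, h2⟩; omega
    subst this; simp
  | succ d ih =>
    intro x hx y hy h
    by_cases hxy : x = y
    · subst hxy
      have h1 : (1:ℝ) ≤ (kap c C₀) ^ (d+1) := one_le_pow₀ (kap_ge_one hc hC₀)
      nlinarith [hπ x hx]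
    · set y' : ℤ := if y < x then y + 1 else y - 1 with hy'def
      have habs := abs_le.mp h
      have hy'I : y' ∈ Finset.Icc (0:ℤ) (N:ℤ) := by
        simp only [Finset.mem_Icc] at hx hy ⊢
        rw [hy'def]; split_ifs <;> omega
      have hd : |x - y'| ≤ (d : ℤ) := by
        rw [abs_le, hy'def]
        split_ifs <;> omega
      have hadj : y' + 1 = y ∨ y' - 1 = y := by
        rw [hy'def]; split_ifs <;> omega
      have step := harnack_adj hm hN hmN hc hC₀ hα hα1 hαs hπ hinv hy'I hy hadj
      have hk1 : (0:ℝ) ≤ (kap c C₀) ^ d := by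
        have := kap_ge_one hc hC₀; positivity
      calc π x ≤ (kap c C₀) ^ d * π y' := ih x hx y' hy'I hd
        _ ≤ (kap c C₀) ^ d * (kap c C₀ * π y) := mul_le_mul_of_nonneg_left step hk1
        _ = (kap c C₀) ^ (d+1) * π y := by ring

end Harnack

noncomputable def vker (m : ℕ) (α : ℕ → ℝ) (s : ℤ) : ℝ :=
  ∑ k ∈ Finset.Icc 1 m, α k * ((max ((k : ℤ) - |s|) 0 : ℤ) : ℝ)

section Vker

variable {m : ℕ} {α : ℕ → ℝ} {c C₀ : ℝ}

lemma vker_nonneg (hα : ∀ k ∈ Finset.Icc 1 m, 0 ≤ α k) (s : ℤ) : 0 ≤ vker m α s := by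
  apply Finset.sum_nonneg
  intro k hk
  apply mul_nonneg (hα k hk)
  have : (0:ℤ) ≤ max ((k : ℤ) - |s|) 0 := le_max_right _ _
  exact_mod_cast this

lemma vker_le (hα : ∀ k ∈ Finset.Icc 1 m, 0 ≤ α k)
    (hαs : (∑ k ∈ Finset.Icc 1 m, α k) ≤ C₀) (hC₀ : 0 < C₀) (s : ℤ) :
    vker m α s ≤ (m : ℝ) * C₀ := by
  calc vker m α s ≤ ∑ k ∈ Finset.Icc 1 m, α k * (m : ℝ) := by
        apply Finset.sum_le_sum
        intro k hk
        apply mul_le_mul_of_nonneg_left _ (hα k hk)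
        have hkm : k ≤ m := (Finset.mem_Icc.mp hk).2
        have : (max ((k : ℤ) - |s|) 0 : ℤ) ≤ (m : ℤ) := by
          have := abs_nonneg s; omega
        exact_mod_cast this
    _ = (∑ k ∈ Finset.Icc 1 m, α k) * (m : ℝ) := by rw [Finset.sum_mul]
    _ ≤ (m : ℝ) * C₀ := by
        have hm0 : (0:ℝ) ≤ (m:ℝ) := by positivity
        nlinarith

lemma vker_eq_zero (s : ℤ) (h : (m : ℤ) ≤ |s|) : vker m α s = 0 := by
  apply Finset.sum_eq_zero
  intro k hk
  have hkm : k ≤ m := (Finset.mem_Icc.mp hk).2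
  have : (max ((k : ℤ) - |s|) 0 : ℤ) = 0 := by omega
  rw [this]
  simp

lemma vker_zero_ge (hm : 1 ≤ m) (hc : 0 < c)
    (hα : ∀ k ∈ Finset.Icc 1 m, 0 ≤ α k) (hα1 : c ≤ α 1) :
    c ≤ vker m α 0 := by
  have h1m : 1 ∈ Finset.Icc 1 m := by simp [hm]
  have : α 1 * ((max ((1 : ℤ) - |(0:ℤ)|) 0 : ℤ) : ℝ) = α 1 := by norm_num
  calc c ≤ α 1 := hα1
    _ = α 1 * ((max ((1 : ℤ) - |(0:ℤ)|) 0 : ℤ) : ℝ) := this.symm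
    _ ≤ vker m α 0 := by
        apply Finset.single_le_sum (f := fun k => α k * ((max ((k : ℤ) - |(0:ℤ)|) 0 : ℤ) : ℝ)) _ h1m
        intro k hk
        apply mul_nonneg (hα k hk)
        have : (0:ℤ) ≤ max ((k : ℤ) - |(0:ℤ)|) 0 := le_max_right _ _
        exact_mod_cast this

end Vker

lemma int_ramp (d k : ℤ) (hk : 0 ≤ k) :
    max (d + k) 0 + max (d - k) 0 - 2 * max d 0 = max (k - |d|) 0 := by
  rcases abs_cases d with ⟨h, h'⟩ | ⟨h, h'⟩ <;> rw [h] <;> omega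

lemma key_identity (N m : ℕ) (α : ℕ → ℝ) (π : ℤ → ℝ) (hm : 1 ≤ m) (hN : 2 ≤ N)
    (hmN : 2 * m ≤ N)
    (hinv : ∀ φ : ℤ → ℝ, ∑ x ∈ Finset.Icc (0:ℤ) (N:ℤ), π x * Lact N m α φ x = 0)
    (t : ℤ) (ht1 : 2 * (m:ℤ) - 1 ≤ t) (ht2 : t ≤ (N:ℤ) - 2 * m + 1) :
    ∑ x ∈ Finset.Icc (m:ℤ) ((N:ℤ) - m), π x * vker m α (x - t)
      = ∑ x ∈ Finset.Icc ((N:ℤ) - m + 1) (N:ℤ), π x * vker m α (x - (N:ℤ)) := by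
  have hm1 : (1:ℤ) ≤ (m:ℤ) := by exact_mod_cast hm
  have hmN' : 2 * (m:ℤ) ≤ (N:ℤ) := by exact_mod_cast hmN
  set φ : ℤ → ℝ := fun z => ((max (z - t) 0 : ℤ) : ℝ) with hφ
  have hpt : ∀ x ∈ Finset.Icc (0:ℤ) (N:ℤ), π x * Lact N m α φ x =
      ((N:ℝ)^2/2) * ((if (m:ℤ) ≤ x ∧ x ≤ (N:ℤ) - (m:ℤ) then π x * vker m α (x - t) else 0)
        - (if (N:ℤ) - (m:ℤ) + 1 ≤ x then π x * vker m α (x - (N:ℤ)) else 0)) := by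
    intro x hx
    rw [Finset.mem_Icc] at hx
    by_cases h1 : (m:ℤ) ≤ x ∧ x ≤ (N:ℤ) - (m:ℤ)
    · have hL : Lact N m α φ x = ((N:ℝ)^2/2) * vker m α (x - t) := by
        simp only [Lact, if_pos h1]
        congr 1
        unfold vker
        refine Finset.sum_congr rfl fun k hk => ?_
        congr 1
        have hk0 : (0:ℤ) ≤ (k:ℤ) := by positivity
        simp only [hφ]
        rw [show x + (k:ℤ) - t = (x - t) + (k:ℤ) from by ring,
           show x - (k:ℤ) - t = (x - t) - (k:ℤ) from by ring,
           ← int_ramp (x - t) (k:ℤ) hk0]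
        push_cast
        ring
      rw [hL, if_pos h1, if_neg (by omega)]
      ring
    · by_cases h2 : (0:ℤ) ≤ x ∧ x ≤ (m:ℤ) - 1
      · have hL : Lact N m α φ x = 0 := by
          simp only [Lact, if_neg h1, if_pos h2]
          have : ∀ k ∈ Finset.Icc 1 m,
              α k * ((φ (x + k) - φ x) + (φ (x - min (k:ℤ) x) - φ x)) = 0 := by
            intro k hk
            rw [Finset.mem_Icc] at hk
            have hkm : (k:ℤ) ≤ (m:ℤ) := by exact_mod_cast hk.2
            have e1 : (max (x + (k:ℤ) - t) 0 : ℤ) = 0 := by omega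
            have e2 : (max (x - t) 0 : ℤ) = 0 := by omega
            have e3 : (max (x - min (k:ℤ) x - t) 0 : ℤ) = 0 := by omega
            simp only [hφ, e1, e2, e3]
            norm_num
          rw [Finset.sum_congr rfl this]
          simp
        rw [hL, if_neg h1, if_neg (by omega)]
        ring
      · have hx3 : (N:ℤ) - (m:ℤ) + 1 ≤ x := by omega
        have hL : Lact N m α φ x = ((N:ℝ)^2/2) * (- vker m α (x - (N:ℤ))) := by
          simp only [Lact, if_neg h1, if_neg h2]
          congr 1
          have hstep : ∀ k ∈ Finset.Icc 1 m,
              α k * ((φ (x - k) - φ x) + (φ (x + min (k:ℤ) ((N:ℤ) - x)) - φ x)) =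
              -(α k * ((max ((k:ℤ) - |x - (N:ℤ)|) 0 : ℤ) : ℝ)) := by
            intro k hk
            rw [Finset.mem_Icc] at hk
            have hk1 : (1:ℤ) ≤ (k:ℤ) := by exact_mod_cast hk.1
            have hkm : (k:ℤ) ≤ (m:ℤ) := by exact_mod_cast hk.2
            have e4 : |x - (N:ℤ)| = (N:ℤ) - x := by
              rw [abs_of_nonpos (by omega)]; ring
            have ezint : (max (x - (k:ℤ) - t) 0 - max (x - t) 0)
                + (max (x + min (k:ℤ) ((N:ℤ) - x) - t) 0 - max (x - t) 0)
                = -(max ((k:ℤ) - |x - (N:ℤ)|) 0) := by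
              rw [e4]; omega
            simp only [hφ]
            have : ((max (x - (k:ℤ) - t) 0 : ℤ) : ℝ) - ((max (x - t) 0 : ℤ) : ℝ)
                + (((max (x + min (k:ℤ) ((N:ℤ) - x) - t) 0 : ℤ) : ℝ) - ((max (x - t) 0 : ℤ) : ℝ))
                = -(((max ((k:ℤ) - |x - (N:ℤ)|) 0 : ℤ)) : ℝ) := by
              have := congrArg (fun z : ℤ => (z : ℝ)) ezint
              push_cast at this ⊢
              linarith
            rw [this]
            ring
          rw [Finset.sum_congr rfl hstep]
          rw [vker]
          rw [← Finset.sum_neg_distrib]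
        rw [hL, if_neg h1, if_pos hx3]
        ring
  have h0 := hinv φ
  rw [Finset.sum_congr rfl hpt, ← Finset.mul_sum] at h0
  have hNne : ((N:ℝ)^2/2) ≠ 0 := by
    have : (0:ℝ) < (N:ℝ) := by exact_mod_cast Nat.lt_of_lt_of_le Nat.zero_lt_two hN
    positivity
  have hsum := (mul_eq_zero.mp h0).resolve_left hNne
  rw [Finset.sum_sub_distrib] at hsum
  have hA : ∑ x ∈ Finset.Icc (0:ℤ) (N:ℤ),
      (if (m:ℤ) ≤ x ∧ x ≤ (N:ℤ) - (m:ℤ) then π x * vker m α (x - t) else 0)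
      = ∑ x ∈ Finset.Icc (m:ℤ) ((N:ℤ) - m), π x * vker m α (x - t) := by
    rw [← Finset.sum_filter]
    congr 1
    ext a
    simp only [Finset.mem_filter, Finset.mem_Icc]
    omega
  have hB : ∑ x ∈ Finset.Icc (0:ℤ) (N:ℤ),
      (if (N:ℤ) - (m:ℤ) + 1 ≤ x then π x * vker m α (x - (N:ℤ)) else 0)
      = ∑ x ∈ Finset.Icc ((N:ℤ) - m + 1) (N:ℤ), π x * vker m α (x - (N:ℤ)) := by
    rw [← Finset.sum_filter]
    congr 1
    ext a
    simp only [Finset.mem_filter, Finset.mem_Icc]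
    omega
  rw [hA, hB] at hsum
  linarith

noncomputable def Cval (m : ℕ) (c C₀ : ℝ) : ℝ :=
  2 * (m:ℝ)^2 * C₀ / c * (kap c C₀)^(6*m) + (kap c C₀)^(4*m)

section Deep

variable {N m : ℕ} {α : ℕ → ℝ} {c C₀ : ℝ} {π : ℤ → ℝ}

lemma deep_upper (hm : 1 ≤ m) (hN : 2 ≤ N) (hmN : 2 * m ≤ N) (hc : 0 < c)
    (hα : ∀ k ∈ Finset.Icc 1 m, 0 ≤ α k) (hα1 : c ≤ α 1)
    (hπ : ∀ x ∈ Finset.Icc (0:ℤ) (N:ℤ), 0 ≤ π x)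
    (hinv : ∀ φ : ℤ → ℝ, ∑ x ∈ Finset.Icc (0:ℤ) (N:ℤ), π x * Lact N m α φ x = 0)
    (t : ℤ) (ht1 : 2 * (m:ℤ) - 1 ≤ t) (ht2 : t ≤ (N:ℤ) - 2 * m + 1) :
    c * π t ≤ ∑ x ∈ Finset.Icc ((N:ℤ) - m + 1) (N:ℤ), π x * vker m α (x - (N:ℤ)) := by
  have hm1 : (1:ℤ) ≤ (m:ℤ) := by exact_mod_cast hm
  have hmN' : 2 * (m:ℤ) ≤ (N:ℤ) := by exact_mod_cast hmN
  have htI : t ∈ Finset.Icc (0:ℤ) (N:ℤ) := by rw [Finset.mem_Icc]; omega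
  have hπt := hπ t htI
  rw [← key_identity N m α π hm hN hmN hinv t ht1 ht2]
  calc c * π t ≤ vker m α 0 * π t :=
        mul_le_mul_of_nonneg_right (vker_zero_ge hm hc hα hα1) hπt
    _ = π t * vker m α (t - t) := by rw [sub_self]; ring
    _ ≤ _ := by
        apply Finset.single_le_sum (f := fun x => π x * vker m α (x - t))
        · intro x hx
          rw [Finset.mem_Icc] at hx
          exact mul_nonneg (hπ x (by rw [Finset.mem_Icc]; omega)) (vker_nonneg hα _)
        · rw [Finset.mem_Icc]; omega

lemma vker_win_sum (hm : 1 ≤ m) (hC₀ : 0 < C₀)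
    (hα : ∀ k ∈ Finset.Icc 1 m, 0 ≤ α k)
    (hαs : (∑ k ∈ Finset.Icc 1 m, α k) ≤ C₀) (t : ℤ) :
    ∑ x ∈ Finset.Icc ((m:ℤ)) ((N:ℤ) - m), vker m α (x - t) ≤ 2 * (m:ℝ)^2 * C₀ := by
  have hsub : ∑ x ∈ Finset.Icc ((m:ℤ)) ((N:ℤ) - m) ∩ Finset.Icc (t - m + 1) (t + m - 1),
      vker m α (x - t) = ∑ x ∈ Finset.Icc ((m:ℤ)) ((N:ℤ) - m), vker m α (x - t) := by
    apply Finset.sum_subset Finset.inter_subset_left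
    intro x hx hnx
    apply vker_eq_zero
    have hx2 : x ∉ Finset.Icc (t - (m:ℤ) + 1) (t + m - 1) := by
      intro hcon
      exact hnx (Finset.mem_inter.mpr ⟨hx, hcon⟩)
    rw [Finset.mem_Icc] at hx2
    rcases abs_cases (x - t) with ⟨e, _⟩ | ⟨e, _⟩ <;> omega
  rw [← hsub]
  have hcard : ((Finset.Icc ((m:ℤ)) ((N:ℤ) - m) ∩ Finset.Icc (t - m + 1) (t + m - 1)).card : ℝ)
      ≤ 2 * (m:ℝ) - 1 := by
    have h1 : (Finset.Icc ((m:ℤ)) ((N:ℤ) - m) ∩ Finset.Icc (t - m + 1) (t + m - 1)).card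
        ≤ (Finset.Icc (t - (m:ℤ) + 1) (t + m - 1)).card :=
      Finset.card_le_card Finset.inter_subset_right
    have h2 : (Finset.Icc (t - (m:ℤ) + 1) (t + m - 1)).card = 2 * m - 1 := by
      rw [Int.card_Icc]
      omega
    rw [h2] at h1
    have h3 : ((2 * m - 1 : ℕ) : ℝ) = 2 * (m:ℝ) - 1 := by
      have : 1 ≤ 2 * m := by omega
      push_cast [this]
      ring
    calc ((Finset.Icc ((m:ℤ)) ((N:ℤ) - m) ∩ Finset.Icc (t - m + 1) (t + m - 1)).card : ℝ)
        ≤ ((2 * m - 1 : ℕ) : ℝ) := by exact_mod_cast h1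
      _ = 2 * (m:ℝ) - 1 := h3
  have hbound : ∑ x ∈ Finset.Icc ((m:ℤ)) ((N:ℤ) - m) ∩ Finset.Icc (t - m + 1) (t + m - 1),
      vker m α (x - t) ≤ ((Finset.Icc ((m:ℤ)) ((N:ℤ) - m) ∩
        Finset.Icc (t - m + 1) (t + m - 1)).card : ℝ) * ((m:ℝ) * C₀) := by
    rw [← nsmul_eq_mul]
    apply Finset.sum_le_card_nsmul
    intro x _
    exact vker_le hα hαs hC₀ _
  have hm1 : (1:ℝ) ≤ (m:ℝ) := by exact_mod_cast hm
  calc ∑ x ∈ Finset.Icc ((m:ℤ)) ((N:ℤ) - m) ∩ Finset.Icc (t - m + 1) (t + m - 1),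
      vker m α (x - t) ≤ _ := hbound
    _ ≤ (2 * (m:ℝ) - 1) * ((m:ℝ) * C₀) := by
        apply mul_le_mul_of_nonneg_right hcard (by positivity)
    _ ≤ 2 * (m:ℝ)^2 * C₀ := by nlinarith

lemma deep_lower (hm : 1 ≤ m) (hN : 2 ≤ N) (hmN : 2 * m ≤ N) (hc : 0 < c) (hC₀ : 0 < C₀)
    (hα : ∀ k ∈ Finset.Icc 1 m, 0 ≤ α k) (hα1 : c ≤ α 1)
    (hαs : (∑ k ∈ Finset.Icc 1 m, α k) ≤ C₀)
    (hπ : ∀ x ∈ Finset.Icc (0:ℤ) (N:ℤ), 0 ≤ π x)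
    (hinv : ∀ φ : ℤ → ℝ, ∑ x ∈ Finset.Icc (0:ℤ) (N:ℤ), π x * Lact N m α φ x = 0)
    (t : ℤ) (ht1 : 2 * (m:ℤ) - 1 ≤ t) (ht2 : t ≤ (N:ℤ) - 2 * m + 1) :
    ∑ x ∈ Finset.Icc ((N:ℤ) - m + 1) (N:ℤ), π x * vker m α (x - (N:ℤ))
      ≤ (2 * (m:ℝ)^2 * C₀) * (kap c C₀)^(2*m) * π t := by
  have hm1 : (1:ℤ) ≤ (m:ℤ) := by exact_mod_cast hm
  have hmN' : 2 * (m:ℤ) ≤ (N:ℤ) := by exact_mod_cast hmN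
  have htI : t ∈ Finset.Icc (0:ℤ) (N:ℤ) := by rw [Finset.mem_Icc]; omega
  have hκ1 := kap_ge_one hc hC₀
  have hκ0 : (0:ℝ) ≤ kap c C₀ := by linarith
  have hπt := hπ t htI
  rw [← key_identity N m α π hm hN hmN hinv t ht1 ht2]
  have hpt : ∀ x ∈ Finset.Icc ((m:ℤ)) ((N:ℤ) - m),
      π x * vker m α (x - t) ≤ ((kap c C₀)^(2*m) * π t) * vker m α (x - t) := by
    intro x hx
    rw [Finset.mem_Icc] at hx
    by_cases hbig : (m:ℤ) ≤ |x - t|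
    · rw [vker_eq_zero _ hbig]
      simp
    · apply mul_le_mul_of_nonneg_right _ (vker_nonneg hα _)
      apply harnack_chain hm hN hmN hc hC₀ hα hα1 hαs hπ hinv (2*m) x
        (by rw [Finset.mem_Icc]; omega) t htI
      push_cast
      rcases abs_cases (x - t) with ⟨e, _⟩ | ⟨e, _⟩ <;> omega
  calc ∑ x ∈ Finset.Icc ((m:ℤ)) ((N:ℤ) - m), π x * vker m α (x - t)
      ≤ ∑ x ∈ Finset.Icc ((m:ℤ)) ((N:ℤ) - m), ((kap c C₀)^(2*m) * π t) * vker m α (x - t) :=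
        Finset.sum_le_sum hpt
    _ = ((kap c C₀)^(2*m) * π t) * ∑ x ∈ Finset.Icc ((m:ℤ)) ((N:ℤ) - m), vker m α (x - t) := by
        rw [Finset.mul_sum]
    _ ≤ ((kap c C₀)^(2*m) * π t) * (2 * (m:ℝ)^2 * C₀) := by
        apply mul_le_mul_of_nonneg_left (vker_win_sum hm hC₀ hα hαs t) (by positivity)
    _ = (2 * (m:ℝ)^2 * C₀) * (kap c C₀)^(2*m) * π t := by ring

end Deep

lemma ratio_bound (m N : ℕ) (c C₀ : ℝ) (α : ℕ → ℝ)
    (hm : 1 ≤ m) (hc : 0 < c) (hC₀ : 0 < C₀) (hN : 2 ≤ N) (hmN : 2 * m ≤ N)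
    (hα : ∀ k ∈ Finset.Icc 1 m, 0 ≤ α k) (hα1 : c ≤ α 1)
    (hαs : (∑ k ∈ Finset.Icc 1 m, α k) ≤ C₀)
    (π : ℤ → ℝ)
    (hπ : ∀ x ∈ Finset.Icc (0:ℤ) (N:ℤ), 0 ≤ π x)
    (hinv : ∀ φ : ℤ → ℝ, ∑ x ∈ Finset.Icc (0:ℤ) (N:ℤ), π x * Lact N m α φ x = 0) :
    ∀ x ∈ Finset.Icc (0:ℤ) (N:ℤ), ∀ y ∈ Finset.Icc (0:ℤ) (N:ℤ),
      π x ≤ Cval m c C₀ * π y := by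
  intro x hx y hy
  have hκ1 : (1:ℝ) ≤ kap c C₀ := kap_ge_one hc hC₀
  have hκ0 : (0:ℝ) ≤ kap c C₀ := by linarith
  have hm1 : (1:ℤ) ≤ (m:ℤ) := by exact_mod_cast hm
  have hmN' : 2 * (m:ℤ) ≤ (N:ℤ) := by exact_mod_cast hmN
  have hxI := Finset.mem_Icc.mp hx
  have hyI := Finset.mem_Icc.mp hy
  have hπy := hπ y hy
  by_cases hbig : 4 * m ≤ N + 2
  · have hbig' : 4 * (m:ℤ) ≤ (N:ℤ) + 2 := by exact_mod_cast hbig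
    set tx : ℤ := max (2 * (m:ℤ) - 1) (min x ((N:ℤ) - 2 * m + 1)) with htxdef
    set ty : ℤ := max (2 * (m:ℤ) - 1) (min y ((N:ℤ) - 2 * m + 1)) with htydef
    have htx1 : 2 * (m:ℤ) - 1 ≤ tx := le_max_left _ _
    have htx2 : tx ≤ (N:ℤ) - 2 * m + 1 := by rw [htxdef]; omega
    have hty1 : 2 * (m:ℤ) - 1 ≤ ty := le_max_left _ _
    have hty2 : ty ≤ (N:ℤ) - 2 * m + 1 := by rw [htydef]; omega
    have htxI : tx ∈ Finset.Icc (0:ℤ) (N:ℤ) := by rw [Finset.mem_Icc]; omega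
    have htyI : ty ∈ Finset.Icc (0:ℤ) (N:ℤ) := by rw [Finset.mem_Icc]; omega
    have hdx : |x - tx| ≤ ((2 * m : ℕ) : ℤ) := by
      push_cast
      rw [abs_le, htxdef]
      omega
    have hdy : |ty - y| ≤ ((2 * m : ℕ) : ℤ) := by
      push_cast
      rw [abs_le, htydef]
      omega
    have chain1 : π x ≤ (kap c C₀)^(2*m) * π tx :=
      harnack_chain hm hN hmN hc hC₀ hα hα1 hαs hπ hinv (2*m) x hx tx htxI hdx
    have chain2 : π ty ≤ (kap c C₀)^(2*m) * π y :=
      harnack_chain hm hN hmN hc hC₀ hα hα1 hαs hπ hinv (2*m) ty htyI y hy hdy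
    have up := deep_upper hm hN hmN hc hα hα1 hπ hinv tx htx1 htx2
    have low := deep_lower hm hN hmN hc hC₀ hα hα1 hαs hπ hinv ty hty1 hty2
    -- c * π x ≤ 2 m² C₀ κ^{6m} π y
    have hpow : (kap c C₀)^(2*m) * ((kap c C₀)^(2*m) * (kap c C₀)^(2*m)) = (kap c C₀)^(6*m) := by
      rw [← pow_add, ← pow_add]
      congr 1
      omega
    have key : c * π x ≤ 2 * (m:ℝ)^2 * C₀ * (kap c C₀)^(6*m) * π y := by
      have s1 : c * π x ≤ (kap c C₀)^(2*m) * (c * π tx) := by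
        have := mul_le_mul_of_nonneg_left chain1 hc.le
        calc c * π x ≤ c * ((kap c C₀)^(2*m) * π tx) := this
          _ = (kap c C₀)^(2*m) * (c * π tx) := by ring
      have s2 : c * π tx ≤ (2 * (m:ℝ)^2 * C₀) * (kap c C₀)^(2*m) * π ty := up.trans low
      have s3 : (2 * (m:ℝ)^2 * C₀) * (kap c C₀)^(2*m) * π ty
          ≤ (2 * (m:ℝ)^2 * C₀) * (kap c C₀)^(2*m) * ((kap c C₀)^(2*m) * π y) := by
        apply mul_le_mul_of_nonneg_left chain2 (by positivity)
      have s4 : (kap c C₀)^(2*m) * (c * π tx)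
          ≤ (kap c C₀)^(2*m) * ((2 * (m:ℝ)^2 * C₀) * (kap c C₀)^(2*m) * ((kap c C₀)^(2*m) * π y)) := by
        apply mul_le_mul_of_nonneg_left (s2.trans s3) (by positivity)
      calc c * π x ≤ _ := s1
        _ ≤ _ := s4
        _ = 2 * (m:ℝ)^2 * C₀ * ((kap c C₀)^(2*m) * ((kap c C₀)^(2*m) * (kap c C₀)^(2*m))) * π y := by
            ring
        _ = 2 * (m:ℝ)^2 * C₀ * (kap c C₀)^(6*m) * π y := by rw [hpow]
    have main : π x ≤ 2 * (m:ℝ)^2 * C₀ / c * (kap c C₀)^(6*m) * π y := by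
      rw [div_mul_eq_mul_div, div_mul_eq_mul_div, le_div_iff₀ hc]
      linarith
    have hlast : (0:ℝ) ≤ (kap c C₀)^(4*m) * π y := by positivity
    calc π x ≤ 2 * (m:ℝ)^2 * C₀ / c * (kap c C₀)^(6*m) * π y := main
      _ ≤ Cval m c C₀ * π y := by rw [Cval]; nlinarith
  · have hd : |x - y| ≤ ((4 * m : ℕ) : ℤ) := by
      push_cast
      rw [abs_le]
      omega
    have := harnack_chain hm hN hmN hc hC₀ hα hα1 hαs hπ hinv (4*m) x hx y hy hd
    have hfirst : (0:ℝ) ≤ 2 * (m:ℝ)^2 * C₀ / c * (kap c C₀)^(6*m) * π y := by positivity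
    calc π x ≤ (kap c C₀)^(4*m) * π y := this
      _ ≤ Cval m c C₀ * π y := by rw [Cval]; nlinarith

lemma sum_Icc_eq_sum_fin (N : ℕ) (f : ℤ → ℝ) :
    ∑ x ∈ Finset.Icc (0:ℤ) (N:ℤ), f x = ∑ i : Fin (N+1), f ((i : ℕ) : ℤ) := by
  rw [Fin.sum_univ_eq_sum_range (fun i => f ((i : ℕ) : ℤ)) (N+1)]
  apply Finset.sum_nbij' (i := fun (x : ℤ) => x.toNat) (j := fun (n : ℕ) => (n : ℤ))
  · intro a ha
    rw [Finset.mem_Icc] at ha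
    rw [Finset.mem_range]
    omega
  · intro a ha
    rw [Finset.mem_range] at ha
    rw [Finset.mem_Icc]
    omega
  · intro a ha
    rw [Finset.mem_Icc] at ha
    omega
  · intro a _
    omega
  · intro a ha
    rw [Finset.mem_Icc] at ha
    congr 1
    omega

lemma Lact_const_one (N m : ℕ) (α : ℕ → ℝ) (x : ℤ) :
    Lact N m α (fun _ => (1:ℝ)) x = 0 := by
  rw [Lact_apply]
  have : ∑ k ∈ Finset.Icc 1 m, α k * ((1:ℝ) + 1 - 2 * 1) = 0 := by
    apply Finset.sum_eq_zero
    intro k _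
    ring
  rw [this, mul_zero]

lemma Lact_linear (N m : ℕ) (α : ℕ → ℝ) (hmN : 2 * m ≤ N) (φ : ℤ → ℝ) {x : ℤ}
    (hx : x ∈ Finset.Icc (0:ℤ) (N:ℤ)) :
    Lact N m α φ x = ∑ y ∈ Finset.Icc (0:ℤ) (N:ℤ), φ y * Lq N m α x y := by
  have expand : ∀ y : ℤ, φ y * Lq N m α x y =
      ((N:ℝ)^2/2) * ∑ k ∈ Finset.Icc 1 m, (α k *
        ((if jA N m x k = y then φ y else 0) + (if jB N m x k = y then φ y else 0)
          - 2 * (if x = y then φ y else 0))) := by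
    intro y
    rw [Lq, Lact_apply, ← mul_assoc, mul_comm (φ y) (((N:ℝ)^2/2)), mul_assoc, Finset.mul_sum]
    congr 1
    refine Finset.sum_congr rfl fun k _ => ?_
    split_ifs <;> ring
  rw [Finset.sum_congr rfl (fun y _ => expand y), ← Finset.mul_sum, Finset.sum_comm]
  rw [Lact_apply]
  congr 1
  refine Finset.sum_congr rfl fun k hk => ?_
  rw [← Finset.mul_sum]
  congr 1
  have hmem := jmem N m hmN hx hk
  rw [Finset.sum_sub_distrib, Finset.sum_add_distrib, ← Finset.mul_sum]
  rw [Finset.sum_ite_eq, Finset.sum_ite_eq, Finset.sum_ite_eq]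
  rw [if_pos hmem.1, if_pos hmem.2, if_pos hx]

lemma exists_invariant (m N : ℕ) (c C₀ : ℝ) (α : ℕ → ℝ)
    (hm : 1 ≤ m) (hc : 0 < c) (hC₀ : 0 < C₀) (hN : 2 ≤ N) (hmN : 2 * m ≤ N)
    (hα : ∀ k ∈ Finset.Icc 1 m, 0 ≤ α k) (hα1 : c ≤ α 1)
    (hαs : (∑ k ∈ Finset.Icc 1 m, α k) ≤ C₀) :
    ∃ π : ℤ → ℝ,
      (∀ x ∈ Finset.Icc (0:ℤ) (N:ℤ), 0 ≤ π x) ∧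
      (∀ φ : ℤ → ℝ, ∑ x ∈ Finset.Icc (0:ℤ) (N:ℤ), π x * Lact N m α φ x = 0) ∧
      (∑ x ∈ Finset.Icc (0:ℤ) (N:ℤ), π x) = (N : ℝ) + 1 ∧
      ∀ x ∈ Finset.Icc (0:ℤ) (N:ℤ), (Cval m c C₀)⁻¹ ≤ π x ∧ π x ≤ Cval m c C₀ := by
  classical
  set M : Matrix (Fin (N+1)) (Fin (N+1)) ℝ :=
    fun i j => Lq N m α ((i:ℕ):ℤ) ((j:ℕ):ℤ) with hM
  -- row sums vanish
  have hrow : ∀ i : Fin (N+1), ∑ j : Fin (N+1), M i j = 0 := by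
    intro i
    have hiI : ((i:ℕ):ℤ) ∈ Finset.Icc (0:ℤ) (N:ℤ) := by
      rw [Finset.mem_Icc]
      have := i.isLt
      omega
    have h1 : ∑ j : Fin (N+1), M i j
        = ∑ y ∈ Finset.Icc (0:ℤ) (N:ℤ), Lq N m α ((i:ℕ):ℤ) y :=
      (sum_Icc_eq_sum_fin N (fun y => Lq N m α ((i:ℕ):ℤ) y)).symm
    have h2 := Lact_linear N m α hmN (fun _ => (1:ℝ)) hiI
    rw [Lact_const_one] at h2
    rw [h1]
    have h3 : ∑ y ∈ Finset.Icc (0:ℤ) (N:ℤ), Lq N m α ((i:ℕ):ℤ) y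
        = ∑ y ∈ Finset.Icc (0:ℤ) (N:ℤ), (fun _ => (1:ℝ)) y * Lq N m α ((i:ℕ):ℤ) y := by
      refine Finset.sum_congr rfl fun y _ => ?_
      simp
    rw [h3, ← h2]
  -- determinant vanishes
  have hdet : M.det = 0 := by
    rw [← Matrix.exists_mulVec_eq_zero_iff]
    refine ⟨fun _ => (1:ℝ), ?_, ?_⟩
    · intro h
      have := congrFun h ⟨0, by omega⟩
      norm_num at this
    · funext i
      simp only [Matrix.mulVec, dotProduct, mul_one]
      exact hrow i
  obtain ⟨τ, hτ0, hτ⟩ := Matrix.exists_vecMul_eq_zero_iff.mpr hdet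
  -- absolute value is also in the left kernel
  set μ : Fin (N+1) → ℝ := fun i => |τ i| with hμdef
  have hμker : ∀ j : Fin (N+1), ∑ i : Fin (N+1), μ i * M i j = 0 := by
    have hS : ∀ j : Fin (N+1), 0 ≤ ∑ i : Fin (N+1), μ i * M i j := by
      intro j
      have hj : ∑ i : Fin (N+1), τ i * M i j = 0 := by
        have := congrFun hτ j
        simpa [Matrix.vecMul, dotProduct] using this
      have hsplitτ : τ j * M j j + ∑ i ∈ Finset.univ.erase j, τ i * M i j = 0 := by
        rw [Finset.add_sum_erase _ (fun i => τ i * M i j) (Finset.mem_univ j)]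
        exact hj
      have hsplitμ : ∑ i : Fin (N+1), μ i * M i j
          = μ j * M j j + ∑ i ∈ Finset.univ.erase j, μ i * M i j := by
        rw [Finset.add_sum_erase _ (fun i => μ i * M i j) (Finset.mem_univ j)]
      have hoff : ∀ i ∈ Finset.univ.erase j, 0 ≤ M i j := by
        intro i hi
        have hine : i ≠ j := (Finset.mem_erase.mp hi).1
        apply Lq_offdiag N m α hα
        intro hcast
        apply hine
        apply Fin.ext
        exact_mod_cast hcast
      have habs : |∑ i ∈ Finset.univ.erase j, τ i * M i j|
          ≤ ∑ i ∈ Finset.univ.erase j, μ i * M i j := by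
        calc |∑ i ∈ Finset.univ.erase j, τ i * M i j|
            ≤ ∑ i ∈ Finset.univ.erase j, |τ i * M i j| :=
              Finset.abs_sum_le_sum_abs _ _
          _ = ∑ i ∈ Finset.univ.erase j, μ i * M i j := by
              refine Finset.sum_congr rfl fun i hi => ?_
              rw [abs_mul, abs_of_nonneg (hoff i hi)]
      have hdiag : M j j ≤ 0 := Lq_diag_nonpos N m α hα _
      have heq : |∑ i ∈ Finset.univ.erase j, τ i * M i j| = μ j * (-(M j j)) := by
        have : ∑ i ∈ Finset.univ.erase j, τ i * M i j = -(τ j * M j j) := by linarith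
        rw [this, abs_neg, abs_mul, abs_of_nonpos hdiag]
      rw [hsplitμ]
      have : μ j * (-(M j j)) ≤ ∑ i ∈ Finset.univ.erase j, μ i * M i j := heq ▸ habs
      linarith
    have htot : ∑ j : Fin (N+1), (∑ i : Fin (N+1), μ i * M i j) = 0 := by
      rw [Finset.sum_comm]
      apply Finset.sum_eq_zero
      intro i _
      rw [← Finset.mul_sum, hrow i, mul_zero]
    intro j
    have := (Finset.sum_eq_zero_iff_of_nonneg (fun j _ => hS j)).mp htot j (Finset.mem_univ j)
    exact this
  -- build the ℤ-indexed nonnegative invariant function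
  set π₀ : ℤ → ℝ := fun z =>
    if hz : 0 ≤ z ∧ z ≤ (N:ℤ) then μ ⟨z.toNat, by omega⟩ else 0 with hπ₀def
  have hagree : ∀ i : Fin (N+1), π₀ ((i:ℕ):ℤ) = μ i := by
    intro i
    have hi : (0:ℤ) ≤ ((i:ℕ):ℤ) ∧ ((i:ℕ):ℤ) ≤ (N:ℤ) := by
      have := i.isLt; omega
    simp only [hπ₀def]
    rw [dif_pos hi]
    congr 1
    all_goals (apply Fin.ext; simp)
  have hπ₀nonneg : ∀ x ∈ Finset.Icc (0:ℤ) (N:ℤ), 0 ≤ π₀ x := by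
    intro x _
    simp only [hπ₀def, hμdef]
    split_ifs <;> positivity
  -- invariance of π₀
  have hinner : ∀ y ∈ Finset.Icc (0:ℤ) (N:ℤ),
      ∑ x ∈ Finset.Icc (0:ℤ) (N:ℤ), π₀ x * Lq N m α x y = 0 := by
    intro y hy
    rw [Finset.mem_Icc] at hy
    set j : Fin (N+1) := ⟨y.toNat, by omega⟩ with hjdef
    have hyj : ((j:ℕ):ℤ) = y := by
      simp only [hjdef]
      omega
    have hbr : ∑ x ∈ Finset.Icc (0:ℤ) (N:ℤ), π₀ x * Lq N m α x y
        = ∑ i : Fin (N+1), π₀ ((i:ℕ):ℤ) * Lq N m α ((i:ℕ):ℤ) y :=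
      sum_Icc_eq_sum_fin N (fun x => π₀ x * Lq N m α x y)
    rw [hbr]
    have : ∀ i : Fin (N+1), π₀ ((i:ℕ):ℤ) * Lq N m α ((i:ℕ):ℤ) y = μ i * M i j := by
      intro i
      rw [hagree i]
      simp only [hM]
      rw [hyj]
    rw [Finset.sum_congr rfl (fun i _ => this i)]
    exact hμker j
  have hπ₀inv : ∀ φ : ℤ → ℝ, ∑ x ∈ Finset.Icc (0:ℤ) (N:ℤ), π₀ x * Lact N m α φ x = 0 := by
    intro φ
    have hsw : ∀ x ∈ Finset.Icc (0:ℤ) (N:ℤ), π₀ x * Lact N m α φ x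
        = ∑ y ∈ Finset.Icc (0:ℤ) (N:ℤ), φ y * (π₀ x * Lq N m α x y) := by
      intro x hx
      rw [Lact_linear N m α hmN φ hx, Finset.mul_sum]
      refine Finset.sum_congr rfl fun y _ => by ring
    rw [Finset.sum_congr rfl hsw, Finset.sum_comm]
    apply Finset.sum_eq_zero
    intro y hy
    rw [← Finset.mul_sum, hinner y hy, mul_zero]
  -- total mass is positive
  have hTfin : ∑ x ∈ Finset.Icc (0:ℤ) (N:ℤ), π₀ x = ∑ i : Fin (N+1), μ i := by
    rw [sum_Icc_eq_sum_fin N π₀]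
    exact Finset.sum_congr rfl fun i _ => hagree i
  have hTpos : 0 < ∑ x ∈ Finset.Icc (0:ℤ) (N:ℤ), π₀ x := by
    rw [hTfin]
    obtain ⟨i₀, hi₀⟩ : ∃ i, τ i ≠ 0 := by
      by_contra hcon
      push_neg at hcon
      exact hτ0 (funext fun i => hcon i)
    have hμpos : 0 < μ i₀ := by
      simp only [hμdef]
      exact abs_pos.mpr hi₀
    have hle : μ i₀ ≤ ∑ i : Fin (N+1), μ i := by
      apply Finset.single_le_sum (f := fun i => μ i) _ (Finset.mem_univ i₀)
      intro i _
      simp only [hμdef]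
      exact abs_nonneg _
    linarith
  set T := ∑ x ∈ Finset.Icc (0:ℤ) (N:ℤ), π₀ x with hTdef
  set s : ℝ := ((N:ℝ) + 1) / T with hsdef
  have hspos : 0 < s := by
    have : (0:ℝ) < (N:ℝ) + 1 := by positivity
    exact div_pos this hTpos
  refine ⟨fun z => s * π₀ z, ?_, ?_, ?_, ?_⟩
  · intro x hx
    exact mul_nonneg hspos.le (hπ₀nonneg x hx)
  · intro φ
    have : ∀ x ∈ Finset.Icc (0:ℤ) (N:ℤ), s * π₀ x * Lact N m α φ x
        = s * (π₀ x * Lact N m α φ x) := fun x _ => by ring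
    rw [Finset.sum_congr rfl this, ← Finset.mul_sum, hπ₀inv φ, mul_zero]
  · rw [← Finset.mul_sum, ← hTdef, hsdef]
    field_simp
  · -- pointwise bounds
    have hπs : ∀ x ∈ Finset.Icc (0:ℤ) (N:ℤ), 0 ≤ s * π₀ x :=
      fun x hx => mul_nonneg hspos.le (hπ₀nonneg x hx)
    have hinvs : ∀ φ : ℤ → ℝ, ∑ x ∈ Finset.Icc (0:ℤ) (N:ℤ), (s * π₀ x) * Lact N m α φ x = 0 := by
      intro φ
      have : ∀ x ∈ Finset.Icc (0:ℤ) (N:ℤ), s * π₀ x * Lact N m α φ x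
          = s * (π₀ x * Lact N m α φ x) := fun x _ => by ring
      rw [Finset.sum_congr rfl this, ← Finset.mul_sum, hπ₀inv φ, mul_zero]
    have hrat := ratio_bound m N c C₀ α hm hc hC₀ hN hmN hα hα1 hαs
      (fun z => s * π₀ z) hπs hinvs
    have hmass : ∑ x ∈ Finset.Icc (0:ℤ) (N:ℤ), s * π₀ x = (N:ℝ) + 1 := by
      rw [← Finset.mul_sum, ← hTdef, hsdef]
      field_simp
    have hcard : (Finset.Icc (0:ℤ) (N:ℤ)).card = N + 1 := by
      rw [Int.card_Icc]
      omega
    have hne : (Finset.Icc (0:ℤ) (N:ℤ)).Nonempty := ⟨0, by rw [Finset.mem_Icc]; omega⟩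
    -- a point with value ≤ 1
    obtain ⟨y₀, hy₀I, hy₀⟩ : ∃ y₀ ∈ Finset.Icc (0:ℤ) (N:ℤ), s * π₀ y₀ ≤ 1 := by
      by_contra hcon
      push_neg at hcon
      have hlt : ∑ x ∈ Finset.Icc (0:ℤ) (N:ℤ), (1:ℝ)
          < ∑ x ∈ Finset.Icc (0:ℤ) (N:ℤ), s * π₀ x :=
        Finset.sum_lt_sum_of_nonempty hne (fun x hx => hcon x hx)
      rw [Finset.sum_const, hcard, nsmul_eq_mul, mul_one, hmass] at hlt
      push_cast at hlt
      linarith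
    obtain ⟨x₀, hx₀I, hx₀⟩ : ∃ x₀ ∈ Finset.Icc (0:ℤ) (N:ℤ), 1 ≤ s * π₀ x₀ := by
      by_contra hcon
      push_neg at hcon
      have hlt : ∑ x ∈ Finset.Icc (0:ℤ) (N:ℤ), s * π₀ x
          < ∑ x ∈ Finset.Icc (0:ℤ) (N:ℤ), (1:ℝ) :=
        Finset.sum_lt_sum_of_nonempty hne (fun x hx => hcon x hx)
      rw [Finset.sum_const, hcard, nsmul_eq_mul, mul_one, hmass] at hlt
      push_cast at hlt
      linarith
    have hCpos : 0 < Cval m c C₀ := by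
      have h1 : (1:ℝ) ≤ kap c C₀ := kap_ge_one hc hC₀
      have h2 : (0:ℝ) ≤ 2 * (m:ℝ)^2 * C₀ / c * (kap c C₀)^(6*m) := by positivity
      have h3 : (1:ℝ) ≤ (kap c C₀)^(4*m) := one_le_pow₀ h1
      rw [Cval]
      linarith
    intro x hx
    constructor
    · have h1 : 1 ≤ s * π₀ x₀ := hx₀
      have h2 : s * π₀ x₀ ≤ Cval m c C₀ * (s * π₀ x) := hrat x₀ hx₀I x hx
      rw [inv_eq_one_div, div_le_iff₀ hCpos]
      calc (1:ℝ) ≤ s * π₀ x₀ := h1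
        _ ≤ Cval m c C₀ * (s * π₀ x) := h2
        _ = s * π₀ x * Cval m c C₀ := by ring
    · calc s * π₀ x ≤ Cval m c C₀ * (s * π₀ y₀) := hrat x hx y₀ hy₀I
        _ ≤ Cval m c C₀ * 1 := by
            apply mul_le_mul_of_nonneg_left hy₀ hCpos.le
        _ = Cval m c C₀ := mul_one _

lemma Cval_ge_one (m : ℕ) (c C₀ : ℝ) (hc : 0 < c) (hC₀ : 0 < C₀) : 1 ≤ Cval m c C₀ := by
  have h1 : (1:ℝ) ≤ kap c C₀ := kap_ge_one hc hC₀
  have h2 : (0:ℝ) ≤ 2 * (m:ℝ)^2 * C₀ / c * (kap c C₀)^(6*m) := by positivity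
  have h3 : (1:ℝ) ≤ (kap c C₀)^(4*m) := one_le_pow₀ h1
  rw [Cval]
  linarith

/-- There is a constant `C ≥ 1` depending only on `m, c, C₀` such that any nonnegative
invariant function `π` on `I = {0,…,N}` (i.e. `Σ_{x∈I} π_x (ℒφ)_x = 0` for all `φ`)
satisfies `sup_I π ≤ C · inf_I π`; moreover there exists such an invariant `π ≥ 0` with
total mass `N + 1` and `C⁻¹ ≤ π_x ≤ C` on `I`. -/
theorem invariant_measure_elliptic_estimate
    (m : ℕ) (c C₀ : ℝ) (hm : 1 ≤ m) (hc : 0 < c) (hC₀ : 0 < C₀) :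
    ∃ C : ℝ, 1 ≤ C ∧
      ∀ (N : ℕ) (α : ℕ → ℝ), 2 ≤ N → 2 * m ≤ N →
        (∀ k ∈ Finset.Icc 1 m, 0 ≤ α k) → c ≤ α 1 →
        (∑ k ∈ Finset.Icc 1 m, α k) ≤ C₀ →
        (∀ π : ℤ → ℝ,
            (∀ x ∈ Finset.Icc (0 : ℤ) (N : ℤ), 0 ≤ π x) →
            (∀ φ : ℤ → ℝ, ∑ x ∈ Finset.Icc (0 : ℤ) (N : ℤ), π x * Lact N m α φ x = 0) →
            ∀ x ∈ Finset.Icc (0 : ℤ) (N : ℤ), ∀ y ∈ Finset.Icc (0 : ℤ) (N : ℤ),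
              π x ≤ C * π y) ∧
        (∃ π : ℤ → ℝ,
            (∀ x ∈ Finset.Icc (0 : ℤ) (N : ℤ), 0 ≤ π x) ∧
            (∀ φ : ℤ → ℝ, ∑ x ∈ Finset.Icc (0 : ℤ) (N : ℤ), π x * Lact N m α φ x = 0) ∧
            (∑ x ∈ Finset.Icc (0 : ℤ) (N : ℤ), π x) = (N : ℝ) + 1 ∧
            ∀ x ∈ Finset.Icc (0 : ℤ) (N : ℤ), C⁻¹ ≤ π x ∧ π x ≤ C) := by
  refine ⟨Cval m c C₀, Cval_ge_one m c C₀ hc hC₀, fun N α hN hmN hα hα1 hαs => ?_⟩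
  constructor
  · intro π hπ hinv
    exact ratio_bound m N c C₀ α hm hc hC₀ hN hmN hα hα1 hαs π hπ hinv
  · exact exists_invariant m N c C₀ α hm hc hC₀ hN hmN hα hα1 hαs
end

section
/- Every function π : I → ℝ satisfying Σ_{x∈I} π_x·(ℒφ)_x = 0 for every function φ : I → ℝ attains its extrema over I on the two boundary blocks: sup_{x∈I} π_x = max{ max_{0≤x≤m−1} π_x , max_{N−m+1≤x≤N} π_x } and inf_{x∈I} π_x = min{ min_{0≤x≤m−1} π_x , min_{N−m+1≤x≤N} π_x }. -/
open scoped BigOperators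

lemma bulk_equation (N m : ℕ) (hm : 1 ≤ m) (hN : 2 ≤ N) (h2m : 2 * m ≤ N)
    (α : ℕ → ℝ) (π : ℤ → ℝ)
    (hinv : ∀ φ : ℤ → ℝ, ∑ x ∈ Finset.Icc (0 : ℤ) (N : ℤ), π x * Lact N m α φ x = 0)
    (y : ℤ) (hy1 : (m : ℤ) ≤ y) (hy2 : y ≤ (N : ℤ) - (m : ℤ)) :
    ∑ k ∈ Finset.Icc 1 m, α k * (π (y + k) + π (y - k) - 2 * π y) = 0 := by
  set φ : ℤ → ℝ := fun z => if z = y then 1 else 0 with hφ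
  have key := hinv φ
  have hterm : ∀ x ∈ Finset.Icc (0 : ℤ) (N : ℤ),
      π x * Lact N m α φ x =
      ∑ k ∈ Finset.Icc 1 m, ((N : ℝ) ^ 2 / 2) * α k *
        ((if x = y - k then π x else 0) + (if x = y + k then π x else 0)
          - 2 * (if x = y then π x else 0)) := by
    intro x hx
    rw [Finset.mem_Icc] at hx
    rw [Lact]
    have hsplit : ∀ (S : ℝ), π x * (((N : ℝ) ^ 2 / 2) * S) = ((N:ℝ)^2/2) * (π x * S) := by
      intro S; ring
    have rπ1 : (if x = y then π x else 0) = π x * (if x = y then (1:ℝ) else 0) := by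
      split <;> ring
    by_cases hb : (m : ℤ) ≤ x ∧ x ≤ (N : ℤ) - (m : ℤ)
    · rw [if_pos hb, hsplit, Finset.mul_sum, Finset.mul_sum]
      refine Finset.sum_congr rfl ?_
      intro k hk
      rw [Finset.mem_Icc] at hk
      have h1 : φ (x + k) = if x = y - (k:ℤ) then (1:ℝ) else 0 := by
        simp only [hφ]
        by_cases h : x = y - (k:ℤ)
        · rw [if_pos (by omega), if_pos h]
        · rw [if_neg (by omega), if_neg h]
      have h2 : φ (x - k) = if x = y + (k:ℤ) then (1:ℝ) else 0 := by
        simp only [hφ]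
        by_cases h : x = y + (k:ℤ)
        · rw [if_pos (by omega), if_pos h]
        · rw [if_neg (by omega), if_neg h]
      have h3 : φ x = if x = y then (1:ℝ) else 0 := rfl
      have rπ2 : (if x = y - (k:ℤ) then π x else 0)
          = π x * (if x = y - (k:ℤ) then (1:ℝ) else 0) := by split <;> ring
      have rπ3 : (if x = y + (k:ℤ) then π x else 0)
          = π x * (if x = y + (k:ℤ) then (1:ℝ) else 0) := by split <;> ring
      rw [h1, h2, h3, rπ1, rπ2, rπ3]; ring
    · by_cases hl : 0 ≤ x ∧ x ≤ (m : ℤ) - 1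
      · rw [if_neg hb, if_pos hl, hsplit, Finset.mul_sum, Finset.mul_sum]
        refine Finset.sum_congr rfl ?_
        intro k hk
        rw [Finset.mem_Icc] at hk
        have h3 : φ x = 0 := by simp only [hφ]; rw [if_neg]; omega
        have h4 : φ (x - min (k:ℤ) x) = 0 := by
          simp only [hφ]; rw [if_neg]; omega
        have h1 : φ (x + k) = if x = y - (k:ℤ) then (1:ℝ) else 0 := by
          simp only [hφ]
          by_cases h : x = y - (k:ℤ)
          · rw [if_pos (by omega), if_pos h]
          · rw [if_neg (by omega), if_neg h]
        have rπ2 : (if x = y - (k:ℤ) then π x else 0)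
            = π x * (if x = y - (k:ℤ) then (1:ℝ) else 0) := by split <;> ring
        rw [h1, h3, h4, if_neg (show ¬ x = y + (k:ℤ) by omega),
          if_neg (show ¬ x = y by omega), rπ2]; ring
      · rw [if_neg hb, if_neg hl, hsplit, Finset.mul_sum, Finset.mul_sum]
        refine Finset.sum_congr rfl ?_
        intro k hk
        rw [Finset.mem_Icc] at hk
        have hxr : (N:ℤ) - m + 1 ≤ x := by omega
        have h3 : φ x = 0 := by simp only [hφ]; rw [if_neg]; omega
        have h4 : φ (x + min (k:ℤ) ((N:ℤ) - x)) = 0 := by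
          simp only [hφ]; rw [if_neg]; omega
        have h2 : φ (x - k) = if x = y + (k:ℤ) then (1:ℝ) else 0 := by
          simp only [hφ]
          by_cases h : x = y + (k:ℤ)
          · rw [if_pos (by omega), if_pos h]
          · rw [if_neg (by omega), if_neg h]
        have rπ3 : (if x = y + (k:ℤ) then π x else 0)
            = π x * (if x = y + (k:ℤ) then (1:ℝ) else 0) := by split <;> ring
        rw [h2, h3, h4, if_neg (show ¬ x = y - (k:ℤ) by omega),
          if_neg (show ¬ x = y by omega), rπ3]; ring
  rw [Finset.sum_congr rfl hterm, Finset.sum_comm] at key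
  have hinner : ∀ k ∈ Finset.Icc 1 m,
      ∑ x ∈ Finset.Icc (0:ℤ) (N:ℤ), ((N : ℝ) ^ 2 / 2) * α k *
        ((if x = y - k then π x else 0) + (if x = y + k then π x else 0)
          - 2 * (if x = y then π x else 0)) =
      ((N:ℝ)^2/2) * (α k * (π (y + k) + π (y - k) - 2 * π y)) := by
    intro k hk
    rw [Finset.mem_Icc] at hk
    have m1 : y - (k:ℤ) ∈ Finset.Icc (0:ℤ) (N:ℤ) := by rw [Finset.mem_Icc]; omega
    have m2 : y + (k:ℤ) ∈ Finset.Icc (0:ℤ) (N:ℤ) := by rw [Finset.mem_Icc]; omega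
    have m3 : y ∈ Finset.Icc (0:ℤ) (N:ℤ) := by rw [Finset.mem_Icc]; omega
    have expand : ∀ x : ℤ, ((N : ℝ) ^ 2 / 2) * α k *
        ((if x = y - k then π x else 0) + (if x = y + k then π x else 0)
          - 2 * (if x = y then π x else 0)) =
        ((N:ℝ)^2/2) * α k * (if x = y - (k:ℤ) then π x else 0)
        + ((N:ℝ)^2/2) * α k * (if x = y + (k:ℤ) then π x else 0)
        - 2 * (((N:ℝ)^2/2) * α k) * (if x = y then π x else 0) := by intro x; ring
    simp only [expand]
    rw [Finset.sum_sub_distrib, Finset.sum_add_distrib,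
      ← Finset.mul_sum, ← Finset.mul_sum, ← Finset.mul_sum,
      Finset.sum_ite_eq' _ (y - (k:ℤ)) π, Finset.sum_ite_eq' _ (y + (k:ℤ)) π,
      Finset.sum_ite_eq' _ y π, if_pos m1, if_pos m2, if_pos m3]
    ring
  rw [Finset.sum_congr rfl hinner, ← Finset.mul_sum] at key
  have hN2 : ((N:ℝ)^2/2) ≠ 0 := by positivity
  rcases mul_eq_zero.1 key with h | h
  · exact absurd h hN2
  · exact h

lemma max_principle (N m : ℕ) (hm : 1 ≤ m) (hN : 2 ≤ N) (h2m : 2 * m ≤ N)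
    (α : ℕ → ℝ) (hα : ∀ k ∈ Finset.Icc 1 m, 0 ≤ α k) (hα1 : 0 < α 1)
    (ρ : ℤ → ℝ)
    (heq : ∀ y : ℤ, (m : ℤ) ≤ y → y ≤ (N : ℤ) - (m : ℤ) →
      ∑ k ∈ Finset.Icc 1 m, α k * (ρ (y + k) + ρ (y - k) - 2 * ρ y) = 0)
    (hI : (Finset.Icc (0 : ℤ) (N : ℤ)).Nonempty)
    (hL : (Finset.Icc (0 : ℤ) ((m : ℤ) - 1)).Nonempty)
    (hR : (Finset.Icc ((N : ℤ) - (m : ℤ) + 1) (N : ℤ)).Nonempty) :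
    (Finset.Icc (0 : ℤ) (N : ℤ)).sup' hI ρ =
      max ((Finset.Icc (0 : ℤ) ((m : ℤ) - 1)).sup' hL ρ)
        ((Finset.Icc ((N : ℤ) - (m : ℤ) + 1) (N : ℤ)).sup' hR ρ) := by
  set M := (Finset.Icc (0 : ℤ) (N : ℤ)).sup' hI ρ with hM
  have hle : ∀ x : ℤ, 0 ≤ x → x ≤ (N : ℤ) → ρ x ≤ M := by
    intro x h0 h1
    exact Finset.le_sup' ρ (Finset.mem_Icc.2 ⟨h0, h1⟩)
  -- one-step propagation
  have step : ∀ y : ℤ, (m : ℤ) ≤ y → y ≤ (N : ℤ) - (m : ℤ) → ρ y = M → ρ (y + 1) = M := by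
    intro y hy1 hy2 hyM
    have h0 := heq y hy1 hy2
    have h0' : ∑ k ∈ Finset.Icc 1 m, α k * ((M - ρ (y + k)) + (M - ρ (y - k))) = 0 := by
      have : ∑ k ∈ Finset.Icc 1 m, α k * ((M - ρ (y + k)) + (M - ρ (y - k))) =
          - ∑ k ∈ Finset.Icc 1 m, α k * (ρ (y + k) + ρ (y - k) - 2 * ρ y) := by
        rw [← Finset.sum_neg_distrib]
        refine Finset.sum_congr rfl ?_
        intro k hk
        rw [hyM]; ring
      rw [this, h0, neg_zero]
    have hnonneg : ∀ k ∈ Finset.Icc 1 m,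
        0 ≤ α k * ((M - ρ (y + k)) + (M - ρ (y - k))) := by
      intro k hk
      rw [Finset.mem_Icc] at hk
      have hk' : k ∈ Finset.Icc 1 m := Finset.mem_Icc.2 hk
      have h1 : ρ (y + k) ≤ M := hle _ (by omega) (by omega)
      have h2 : ρ (y - k) ≤ M := hle _ (by omega) (by omega)
      have := hα k hk'
      nlinarith
    have hall := (Finset.sum_eq_zero_iff_of_nonneg hnonneg).1 h0'
    have h1m : 1 ∈ Finset.Icc 1 m := Finset.mem_Icc.2 ⟨le_refl 1, hm⟩
    have h1 := hall 1 h1m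
    have hy1' : ρ (y + 1) ≤ M := hle _ (by omega) (by omega)
    have hy2' : ρ (y - 1) ≤ M := hle _ (by omega) (by omega)
    have : ((M - ρ (y + 1)) + (M - ρ (y - 1))) = 0 := by
      rcases mul_eq_zero.1 h1 with h | h
      · exact absurd h (ne_of_gt (by exact_mod_cast hα1))
      · exact_mod_cast h
    push_cast at this
    linarith
  -- propagation by induction
  have prop : ∀ j : ℕ, ∀ y : ℤ, (m : ℤ) ≤ y → y + j ≤ (N : ℤ) - (m : ℤ) → ρ y = M →
      ρ (y + j + 1) = M := by
    intro j
    induction j with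
    | zero => intro y h1 h2 h3; simpa using step y h1 (by omega) h3
    | succ n ih =>
      intro y h1 h2 h3
      have hs : ρ (y + 1) = M := step y h1 (by omega) h3
      have := ih (y + 1) (by omega) (by push_cast; omega) hs
      have e : y + 1 + (n : ℤ) + 1 = y + ((n : ℤ) + 1) + 1 := by ring
      rw [e] at this
      push_cast
      convert this using 2
  refine le_antisymm ?_ ?_
  · -- M ≤ max : M is attained, and propagates into a boundary block
    obtain ⟨z, hz, hzM⟩ := Finset.exists_mem_eq_sup' hI ρ
    rw [Finset.mem_Icc] at hz
    have hzM' : ρ z = M := by rw [hM, ← hzM]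
    by_cases hzl : z ≤ (m : ℤ) - 1
    · refine le_max_of_le_left ?_
      rw [← hzM']
      exact Finset.le_sup' ρ (Finset.mem_Icc.2 ⟨hz.1, hzl⟩)
    · by_cases hzr : (N : ℤ) - (m : ℤ) + 1 ≤ z
      · refine le_max_of_le_right ?_
        rw [← hzM']
        exact Finset.le_sup' ρ (Finset.mem_Icc.2 ⟨hzr, hz.2⟩)
      · -- bulk
        have hz1 : (m : ℤ) ≤ z := by omega
        have hz2 : z ≤ (N : ℤ) - (m : ℤ) := by omega
        set j : ℕ := ((N : ℤ) - (m : ℤ) - z).toNat with hj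
        have hjz : z + (j : ℤ) = (N : ℤ) - (m : ℤ) := by
          rw [hj, Int.toNat_of_nonneg (by omega)]; ring
        have hprop := prop j z hz1 (by omega) hzM'
        refine le_max_of_le_right ?_
        rw [← hprop, hjz]
        exact Finset.le_sup' ρ (Finset.mem_Icc.2 ⟨le_refl _, by omega⟩)
  · refine max_le ?_ ?_
    · refine Finset.sup'_le _ _ ?_
      intro x hx
      rw [Finset.mem_Icc] at hx
      exact hle x hx.1 (by omega)
    · refine Finset.sup'_le _ _ ?_
      intro x hx
      rw [Finset.mem_Icc] at hx
      exact hle x (by omega) hx.2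

lemma inf'_eq_neg_sup' (s : Finset ℤ) (hs : s.Nonempty) (f : ℤ → ℝ) :
    s.inf' hs f = - s.sup' hs (fun x => - f x) := by
  refine le_antisymm ?_ ?_
  · rw [le_neg]
    refine Finset.sup'_le _ _ ?_
    intro x hx
    exact neg_le_neg (Finset.inf'_le _ hx)
  · refine Finset.le_inf' _ _ ?_
    intro x hx
    rw [neg_le]
    exact Finset.le_sup' (fun x => - f x) hx

/-- Any invariant function `π` for `ℒ` on `I = {0,…,N}` attains its maximum and its
minimum over `I` on the union of the two boundary blocks `{0,…,m−1}` and
`{N−m+1,…,N}`. -/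
theorem invariant_measure_extrema_on_boundary
    (N m : ℕ) (c C₀ : ℝ) (hm : 1 ≤ m) (hN : 2 ≤ N) (h2m : 2 * m ≤ N)
    (hc : 0 < c) (hC₀ : 0 < C₀)
    (α : ℕ → ℝ) (hα : ∀ k ∈ Finset.Icc 1 m, 0 ≤ α k)
    (hα1 : c ≤ α 1) (hαsum : (∑ k ∈ Finset.Icc 1 m, α k) ≤ C₀)
    (π : ℤ → ℝ)
    (hinv : ∀ φ : ℤ → ℝ, ∑ x ∈ Finset.Icc (0 : ℤ) (N : ℤ), π x * Lact N m α φ x = 0) :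
    (Finset.Icc (0 : ℤ) (N : ℤ)).sup' (Finset.nonempty_Icc.2 (by omega)) π =
      max ((Finset.Icc (0 : ℤ) ((m : ℤ) - 1)).sup' (Finset.nonempty_Icc.2 (by omega)) π)
        ((Finset.Icc ((N : ℤ) - (m : ℤ) + 1) (N : ℤ)).sup'
          (Finset.nonempty_Icc.2 (by omega)) π) ∧
    (Finset.Icc (0 : ℤ) (N : ℤ)).inf' (Finset.nonempty_Icc.2 (by omega)) π =
      min ((Finset.Icc (0 : ℤ) ((m : ℤ) - 1)).inf' (Finset.nonempty_Icc.2 (by omega)) π)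
        ((Finset.Icc ((N : ℤ) - (m : ℤ) + 1) (N : ℤ)).inf'
          (Finset.nonempty_Icc.2 (by omega)) π) := by
  have hα1pos : 0 < α 1 := lt_of_lt_of_le hc hα1
  have heq : ∀ y : ℤ, (m : ℤ) ≤ y → y ≤ (N : ℤ) - (m : ℤ) →
      ∑ k ∈ Finset.Icc 1 m, α k * (π (y + k) + π (y - k) - 2 * π y) = 0 :=
    bulk_equation N m hm hN h2m α π hinv
  have heqneg : ∀ y : ℤ, (m : ℤ) ≤ y → y ≤ (N : ℤ) - (m : ℤ) →
      ∑ k ∈ Finset.Icc 1 m, α k * ((-π) (y + k) + (-π) (y - k) - 2 * (-π) y) = 0 := by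
    intro y h1 h2
    have h0 := heq y h1 h2
    have : ∑ k ∈ Finset.Icc 1 m, α k * ((-π) (y + k) + (-π) (y - k) - 2 * (-π) y) =
        - ∑ k ∈ Finset.Icc 1 m, α k * (π (y + k) + π (y - k) - 2 * π y) := by
      rw [← Finset.sum_neg_distrib]
      refine Finset.sum_congr rfl ?_
      intro k hk
      simp only [Pi.neg_apply]
      ring
    rw [this, h0, neg_zero]
  constructor
  · exact max_principle N m hm hN h2m α hα hα1pos π heq _ _ _
  · have hsupneg := max_principle N m hm hN h2m α hα hα1pos (-π) heqneg
      (Finset.nonempty_Icc.2 (by omega)) (Finset.nonempty_Icc.2 (by omega))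
      (Finset.nonempty_Icc.2 (by omega))
    rw [inf'_eq_neg_sup', inf'_eq_neg_sup', inf'_eq_neg_sup']
    have hfun : (fun x => - π x) = -π := rfl
    rw [hfun, hsupneg, min_neg_neg]
end

section
/- There exists a constant κ > 0 depending only on c and C₀ such that every function π : I → ℝ with π_x ≥ 0 on I and Σ_{x∈I} π_x·(ℒφ)_x = 0 for every φ : I → ℝ satisfies max_{0≤x≤m−1} π_x ≤ π_0 ≤ κ^m · min_{0≤x≤m−1} π_x and max_{N−m+1≤x≤N} π_x ≤ π_N ≤ κ^m · min_{N−m+1≤x≤N} π_x; moreover π_0 = π_N. -/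
open scoped BigOperators

/-- point mass test function -/
noncomputable def dd (y z : ℤ) : ℝ := if z = y then 1 else 0

lemma dd_nonneg (y z : ℤ) : 0 ≤ dd y z := by unfold dd; split_ifs <;> norm_num

lemma Lact_dd_offdiag_nonneg (N m : ℕ) (α : ℕ → ℝ)
    (hα : ∀ k ∈ Finset.Icc 1 m, 0 ≤ α k) (y x : ℤ) (hxy : x ≠ y) :
    0 ≤ Lact N m α (dd y) x := by
  have hN2 : (0:ℝ) ≤ (N:ℝ)^2/2 := by positivity
  unfold Lact
  split_ifs with h1 h2 <;>
  · refine mul_nonneg hN2 (Finset.sum_nonneg fun k hk => mul_nonneg (hα k hk) ?_)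
    simp only [dd, if_neg hxy]
    split_ifs <;> norm_num

lemma Lact_dd_diag (N m : ℕ) (α : ℕ → ℝ) (y : ℤ) (h1 : 1 ≤ y) (h2 : y ≤ (N:ℤ) - 1) :
    Lact N m α (dd y) y = -(((N:ℝ)^2/2) * (2 * ∑ k ∈ Finset.Icc 1 m, α k)) := by
  unfold Lact
  split_ifs with hb1 hb2
  · have e : ∑ k ∈ Finset.Icc 1 m, α k * (dd y (y + k) + dd y (y - k) - 2 * dd y y)
        = ∑ k ∈ Finset.Icc 1 m, (-2) * α k := by
      refine Finset.sum_congr rfl fun k hk => ?_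
      have hk1 : (1:ℤ) ≤ (k:ℤ) := by exact_mod_cast (Finset.mem_Icc.mp hk).1
      simp only [dd]
      rw [if_neg (show ¬(y + (k:ℤ) = y) by omega), if_neg (show ¬(y - (k:ℤ) = y) by omega),
        ]
      norm_num
      try ring
    rw [e, ← Finset.mul_sum]; ring
  · have e : ∑ k ∈ Finset.Icc 1 m,
        α k * ((dd y (y + k) - dd y y) + (dd y (y - min (k:ℤ) y) - dd y y))
        = ∑ k ∈ Finset.Icc 1 m, (-2) * α k := by
      refine Finset.sum_congr rfl fun k hk => ?_
      have hk1 : (1:ℤ) ≤ (k:ℤ) := by exact_mod_cast (Finset.mem_Icc.mp hk).1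
      simp only [dd]
      rw [if_neg (show ¬(y + (k:ℤ) = y) by omega),
        if_neg (show ¬(y - min (k:ℤ) y = y) by omega)]
      norm_num
      try ring
    rw [e, ← Finset.mul_sum]; ring
  · have e : ∑ k ∈ Finset.Icc 1 m,
        α k * ((dd y (y - k) - dd y y) + (dd y (y + min (k:ℤ) ((N:ℤ) - y)) - dd y y))
        = ∑ k ∈ Finset.Icc 1 m, (-2) * α k := by
      refine Finset.sum_congr rfl fun k hk => ?_
      have hk1 : (1:ℤ) ≤ (k:ℤ) := by exact_mod_cast (Finset.mem_Icc.mp hk).1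
      simp only [dd]
      rw [if_neg (show ¬(y - (k:ℤ) = y) by omega),
        if_neg (show ¬(y + min (k:ℤ) ((N:ℤ) - y) = y) by omega)]
      norm_num
      try ring
    rw [e, ← Finset.mul_sum]; ring

lemma Lact_dd_diag0 (N m : ℕ) (α : ℕ → ℝ) (hm : 1 ≤ m) :
    Lact N m α (dd 0) 0 = -(((N:ℝ)^2/2) * (∑ k ∈ Finset.Icc 1 m, α k)) := by
  unfold Lact
  rw [if_neg (by omega), if_pos (by omega)]
  have e : ∑ k ∈ Finset.Icc 1 m,
      α k * ((dd 0 (0 + k) - dd 0 0) + (dd 0 (0 - min (k:ℤ) 0) - dd 0 0))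
      = ∑ k ∈ Finset.Icc 1 m, (-1) * α k := by
    refine Finset.sum_congr rfl fun k hk => ?_
    have hk1 : (1:ℤ) ≤ (k:ℤ) := by exact_mod_cast (Finset.mem_Icc.mp hk).1
    simp only [dd]
    rw [if_neg (show ¬((0:ℤ) + (k:ℤ) = 0) by omega),
      if_pos (show (0:ℤ) - min (k:ℤ) 0 = 0 by omega)]
    norm_num
    try ring
  rw [e, ← Finset.mul_sum]; ring

lemma Lact_dd_diagN (N m : ℕ) (α : ℕ → ℝ) (hm : 1 ≤ m) (h2m : 2*m ≤ N) :
    Lact N m α (dd N) N = -(((N:ℝ)^2/2) * (∑ k ∈ Finset.Icc 1 m, α k)) := by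
  unfold Lact
  rw [if_neg (by omega), if_neg (by omega)]
  have e : ∑ k ∈ Finset.Icc 1 m,
      α k * ((dd N ((N:ℤ) - k) - dd N N) + (dd N ((N:ℤ) + min (k:ℤ) ((N:ℤ) - N)) - dd N N))
      = ∑ k ∈ Finset.Icc 1 m, (-1) * α k := by
    refine Finset.sum_congr rfl fun k hk => ?_
    have hk1 : (1:ℤ) ≤ (k:ℤ) := by exact_mod_cast (Finset.mem_Icc.mp hk).1
    simp only [dd]
    rw [if_neg (show ¬((N:ℤ) - (k:ℤ) = N) by omega),
      if_pos (show (N:ℤ) + min (k:ℤ) ((N:ℤ) - N) = N by omega)]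
    norm_num
    try ring
  rw [e, ← Finset.mul_sum]; ring

lemma Lact_dd_upper (N m : ℕ) (α : ℕ → ℝ) (hα : ∀ k ∈ Finset.Icc 1 m, 0 ≤ α k)
    (y x : ℤ) (h1 : 1 ≤ y) (h2 : y ≤ (N:ℤ) - 1) :
    Lact N m α (dd y) x ≤ ((N:ℝ)^2/2) * ∑ k ∈ Finset.Icc 1 m,
      α k * ((if x = y - (k:ℤ) then 1 else 0) + (if x = y + (k:ℤ) then 1 else 0)) := by
  unfold Lact
  split_ifs with hb1 hb2 <;>
  · refine mul_le_mul_of_nonneg_left (Finset.sum_le_sum fun k hk => ?_) (by positivity)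
    have hk1 : (1:ℤ) ≤ (k:ℤ) := by exact_mod_cast (Finset.mem_Icc.mp hk).1
    refine mul_le_mul_of_nonneg_left ?_ (hα k hk)
    simp only [dd]
    split_ifs <;> (try norm_num) <;> omega

lemma Lact_dd_lower_sub (N m : ℕ) (α : ℕ → ℝ) (hα : ∀ k ∈ Finset.Icc 1 m, 0 ≤ α k)
    (hm : 1 ≤ m) (y : ℤ) (h1 : 1 ≤ y) (h2 : y ≤ (N:ℤ) - 1) :
    ((N:ℝ)^2/2) * α 1 ≤ Lact N m α (dd y) (y - 1) := by
  have h1m : 1 ∈ Finset.Icc 1 m := Finset.mem_Icc.mpr ⟨le_refl 1, hm⟩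
  unfold Lact
  split_ifs with hb1 hb2 <;>
  · refine mul_le_mul_of_nonneg_left ?_ (by positivity)
    refine le_trans ?_ (Finset.single_le_sum (fun k hk => ?_) h1m)
    · simp only [dd, Nat.cast_one]
      split_ifs <;> (try norm_num) <;> omega
    · have hk1 : (1:ℤ) ≤ (k:ℤ) := by exact_mod_cast (Finset.mem_Icc.mp hk).1
      refine mul_nonneg (hα k hk) ?_
      simp only [dd, if_neg (show ¬(y - 1 = y) by omega)]
      split_ifs <;> norm_num

lemma Lact_dd_lower_add (N m : ℕ) (α : ℕ → ℝ) (hα : ∀ k ∈ Finset.Icc 1 m, 0 ≤ α k)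
    (hm : 1 ≤ m) (y : ℤ) (h1 : 1 ≤ y) (h2 : y ≤ (N:ℤ) - 1) :
    ((N:ℝ)^2/2) * α 1 ≤ Lact N m α (dd y) (y + 1) := by
  have h1m : 1 ∈ Finset.Icc 1 m := Finset.mem_Icc.mpr ⟨le_refl 1, hm⟩
  unfold Lact
  split_ifs with hb1 hb2 <;>
  · refine mul_le_mul_of_nonneg_left ?_ (by positivity)
    refine le_trans ?_ (Finset.single_le_sum (fun k hk => ?_) h1m)
    · simp only [dd, Nat.cast_one]
      split_ifs <;> (try norm_num) <;> omega
    · have hk1 : (1:ℤ) ≤ (k:ℤ) := by exact_mod_cast (Finset.mem_Icc.mp hk).1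
      refine mul_nonneg (hα k hk) ?_
      simp only [dd, if_neg (show ¬(y + 1 = y) by omega)]
      split_ifs <;> norm_num

lemma Lact_dd_lower01 (N m : ℕ) (α : ℕ → ℝ) (hα : ∀ k ∈ Finset.Icc 1 m, 0 ≤ α k)
    (hm : 1 ≤ m) (hN : 2 ≤ N) (h2m : 2*m ≤ N) :
    ((N:ℝ)^2/2) * (∑ k ∈ Finset.Icc 1 m, α k) ≤ Lact N m α (dd 0) 1 := by
  unfold Lact
  split_ifs with hb1 hb2
  · have hm1 : m = 1 := by omega
    subst hm1
    refine mul_le_mul_of_nonneg_left (le_of_eq ?_) (by positivity)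
    rw [Finset.Icc_self, Finset.sum_singleton, Finset.sum_singleton]
    simp only [dd, Nat.cast_one]
    norm_num
  · refine mul_le_mul_of_nonneg_left (le_of_eq ?_) (by positivity)
    refine Finset.sum_congr rfl fun k hk => ?_
    have hk1 : (1:ℤ) ≤ (k:ℤ) := by exact_mod_cast (Finset.mem_Icc.mp hk).1
    simp only [dd]
    rw [if_neg (show ¬((1:ℤ) + (k:ℤ) = 0) by omega), if_neg (show ¬((1:ℤ) = 0) by omega),
      if_pos (show (1:ℤ) - min (k:ℤ) 1 = 0 by omega)]
    ring
  · exfalso; omega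

lemma Lact_dd_lowerN (N m : ℕ) (α : ℕ → ℝ) (hα : ∀ k ∈ Finset.Icc 1 m, 0 ≤ α k)
    (hm : 1 ≤ m) (hN : 2 ≤ N) (h2m : 2*m ≤ N) :
    ((N:ℝ)^2/2) * (∑ k ∈ Finset.Icc 1 m, α k) ≤ Lact N m α (dd N) ((N:ℤ) - 1) := by
  unfold Lact
  split_ifs with hb1 hb2
  · have hm1 : m = 1 := by omega
    subst hm1
    refine mul_le_mul_of_nonneg_left (le_of_eq ?_) (by positivity)
    rw [Finset.Icc_self, Finset.sum_singleton, Finset.sum_singleton]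
    simp only [dd, Nat.cast_one]
    rw [if_pos (show (N:ℤ) - 1 + 1 = N by ring), if_neg (show ¬((N:ℤ) - 1 - 1 = N) by omega),
      if_neg (show ¬((N:ℤ) - 1 = N) by omega)]
    ring
  · exfalso; omega
  · refine mul_le_mul_of_nonneg_left (le_of_eq ?_) (by positivity)
    refine Finset.sum_congr rfl fun k hk => ?_
    have hk1 : (1:ℤ) ≤ (k:ℤ) := by exact_mod_cast (Finset.mem_Icc.mp hk).1
    simp only [dd]
    rw [if_neg (show ¬((N:ℤ) - 1 - (k:ℤ) = N) by omega), if_neg (show ¬((N:ℤ) - 1 = N) by omega),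
      if_pos (show (N:ℤ) - 1 + min (k:ℤ) ((N:ℤ) - ((N:ℤ)-1)) = N by omega)]
    ring

section derived
variable {N m : ℕ} {α : ℕ → ℝ} {ρ : ℤ → ℝ}

/-- the balance identity extracted at an interior site. -/
lemma extract_interior
    (hinv : ∀ φ : ℤ → ℝ, ∑ x ∈ Finset.Icc (0:ℤ) (N:ℤ), ρ x * Lact N m α φ x = 0)
    (y : ℤ) (h1 : 1 ≤ y) (h2 : y ≤ (N:ℤ) - 1) :
    ρ y * (((N:ℝ)^2/2) * (2 * ∑ k ∈ Finset.Icc 1 m, α k)) =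
      ∑ x ∈ (Finset.Icc (0:ℤ) (N:ℤ)).erase y, ρ x * Lact N m α (dd y) x := by
  have hb := hinv (dd y)
  have hmem : y ∈ Finset.Icc (0:ℤ) (N:ℤ) := Finset.mem_Icc.mpr (by omega)
  rw [← Finset.sum_erase_add _ _ hmem, Lact_dd_diag N m α y h1 h2, mul_neg] at hb
  linarith

lemma extract_zero (hm : 1 ≤ m)
    (hinv : ∀ φ : ℤ → ℝ, ∑ x ∈ Finset.Icc (0:ℤ) (N:ℤ), ρ x * Lact N m α φ x = 0) :
    ρ 0 * (((N:ℝ)^2/2) * (∑ k ∈ Finset.Icc 1 m, α k)) =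
      ∑ x ∈ (Finset.Icc (0:ℤ) (N:ℤ)).erase 0, ρ x * Lact N m α (dd 0) x := by
  have hb := hinv (dd 0)
  have hmem : (0:ℤ) ∈ Finset.Icc (0:ℤ) (N:ℤ) := Finset.mem_Icc.mpr (by omega)
  rw [← Finset.sum_erase_add _ _ hmem, Lact_dd_diag0 N m α hm, mul_neg] at hb
  linarith

lemma extract_N (hm : 1 ≤ m) (h2m : 2*m ≤ N)
    (hinv : ∀ φ : ℤ → ℝ, ∑ x ∈ Finset.Icc (0:ℤ) (N:ℤ), ρ x * Lact N m α φ x = 0) :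
    ρ N * (((N:ℝ)^2/2) * (∑ k ∈ Finset.Icc 1 m, α k)) =
      ∑ x ∈ (Finset.Icc (0:ℤ) (N:ℤ)).erase (N:ℤ), ρ x * Lact N m α (dd N) x := by
  have hb := hinv (dd N)
  have hmem : (N:ℤ) ∈ Finset.Icc (0:ℤ) (N:ℤ) := Finset.mem_Icc.mpr (by omega)
  rw [← Finset.sum_erase_add _ _ hmem, Lact_dd_diagN N m α hm h2m, mul_neg] at hb
  linarith

lemma spread_sub (hα : ∀ k ∈ Finset.Icc 1 m, 0 ≤ α k) (hm : 1 ≤ m)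
    (hρ : ∀ x ∈ Finset.Icc (0:ℤ) (N:ℤ), 0 ≤ ρ x)
    (hinv : ∀ φ : ℤ → ℝ, ∑ x ∈ Finset.Icc (0:ℤ) (N:ℤ), ρ x * Lact N m α φ x = 0)
    (hN : 2 ≤ N)
    (y : ℤ) (h1 : 1 ≤ y) (h2 : y ≤ (N:ℤ) - 1) :
    ρ (y-1) * α 1 ≤ ρ y * (2 * ∑ k ∈ Finset.Icc 1 m, α k) := by
  have hmem : y - 1 ∈ (Finset.Icc (0:ℤ) (N:ℤ)).erase y := by
    rw [Finset.mem_erase, Finset.mem_Icc]; omega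
  have hE := extract_interior hinv y h1 h2
  have hsingle : ρ (y-1) * Lact N m α (dd y) (y-1) ≤
      ∑ x ∈ (Finset.Icc (0:ℤ) (N:ℤ)).erase y, ρ x * Lact N m α (dd y) x := by
    refine Finset.single_le_sum (f := fun x => ρ x * Lact N m α (dd y) x) (fun x hx => ?_) hmem
    rw [Finset.mem_erase] at hx
    exact mul_nonneg (hρ x hx.2) (Lact_dd_offdiag_nonneg N m α hα y x hx.1)
  have hlow : ρ (y-1) * (((N:ℝ)^2/2) * α 1) ≤ ρ (y-1) * Lact N m α (dd y) (y-1) :=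
    mul_le_mul_of_nonneg_left (Lact_dd_lower_sub N m α hα hm y h1 h2)
      (hρ _ (Finset.mem_of_mem_erase hmem))
  have hr : (0:ℝ) < ((N:ℝ)^2/2) := by
    have : (0:ℝ) < (N:ℝ) := by exact_mod_cast (by omega : 0 < N)
    positivity
  have key : ((N:ℝ)^2/2) * (ρ (y-1) * α 1) ≤ ((N:ℝ)^2/2) * (ρ y * (2 * ∑ k ∈ Finset.Icc 1 m, α k)) := by
    calc ((N:ℝ)^2/2) * (ρ (y-1) * α 1) = ρ (y-1) * (((N:ℝ)^2/2) * α 1) := by ring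
    _ ≤ ∑ x ∈ (Finset.Icc (0:ℤ) (N:ℤ)).erase y, ρ x * Lact N m α (dd y) x := le_trans hlow hsingle
    _ = ρ y * (((N:ℝ)^2/2) * (2 * ∑ k ∈ Finset.Icc 1 m, α k)) := hE.symm
    _ = ((N:ℝ)^2/2) * (ρ y * (2 * ∑ k ∈ Finset.Icc 1 m, α k)) := by ring
  exact le_of_mul_le_mul_left key hr

lemma spread_add (hα : ∀ k ∈ Finset.Icc 1 m, 0 ≤ α k) (hm : 1 ≤ m)
    (hρ : ∀ x ∈ Finset.Icc (0:ℤ) (N:ℤ), 0 ≤ ρ x)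
    (hinv : ∀ φ : ℤ → ℝ, ∑ x ∈ Finset.Icc (0:ℤ) (N:ℤ), ρ x * Lact N m α φ x = 0)
    (hN : 2 ≤ N)
    (y : ℤ) (h1 : 1 ≤ y) (h2 : y ≤ (N:ℤ) - 1) :
    ρ (y+1) * α 1 ≤ ρ y * (2 * ∑ k ∈ Finset.Icc 1 m, α k) := by
  have hmem : y + 1 ∈ (Finset.Icc (0:ℤ) (N:ℤ)).erase y := by
    rw [Finset.mem_erase, Finset.mem_Icc]; omega
  have hE := extract_interior hinv y h1 h2
  have hsingle : ρ (y+1) * Lact N m α (dd y) (y+1) ≤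
      ∑ x ∈ (Finset.Icc (0:ℤ) (N:ℤ)).erase y, ρ x * Lact N m α (dd y) x := by
    refine Finset.single_le_sum (f := fun x => ρ x * Lact N m α (dd y) x) (fun x hx => ?_) hmem
    rw [Finset.mem_erase] at hx
    exact mul_nonneg (hρ x hx.2) (Lact_dd_offdiag_nonneg N m α hα y x hx.1)
  have hlow : ρ (y+1) * (((N:ℝ)^2/2) * α 1) ≤ ρ (y+1) * Lact N m α (dd y) (y+1) :=
    mul_le_mul_of_nonneg_left (Lact_dd_lower_add N m α hα hm y h1 h2)
      (hρ _ (Finset.mem_of_mem_erase hmem))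
  have hr : (0:ℝ) < ((N:ℝ)^2/2) := by
    have : (0:ℝ) < (N:ℝ) := by exact_mod_cast (by omega : 0 < N)
    positivity
  have key : ((N:ℝ)^2/2) * (ρ (y+1) * α 1) ≤ ((N:ℝ)^2/2) * (ρ y * (2 * ∑ k ∈ Finset.Icc 1 m, α k)) := by
    calc ((N:ℝ)^2/2) * (ρ (y+1) * α 1) = ρ (y+1) * (((N:ℝ)^2/2) * α 1) := by ring
    _ ≤ ∑ x ∈ (Finset.Icc (0:ℤ) (N:ℤ)).erase y, ρ x * Lact N m α (dd y) x := le_trans hlow hsingle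
    _ = ρ y * (((N:ℝ)^2/2) * (2 * ∑ k ∈ Finset.Icc 1 m, α k)) := hE.symm
    _ = ((N:ℝ)^2/2) * (ρ y * (2 * ∑ k ∈ Finset.Icc 1 m, α k)) := by ring
  exact le_of_mul_le_mul_left key hr

lemma endpoint_zero (hα : ∀ k ∈ Finset.Icc 1 m, 0 ≤ α k) (hm : 1 ≤ m) (hN : 2 ≤ N)
    (h2m : 2*m ≤ N) (hApos : 0 < ∑ k ∈ Finset.Icc 1 m, α k)
    (hρ : ∀ x ∈ Finset.Icc (0:ℤ) (N:ℤ), 0 ≤ ρ x)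
    (hinv : ∀ φ : ℤ → ℝ, ∑ x ∈ Finset.Icc (0:ℤ) (N:ℤ), ρ x * Lact N m α φ x = 0) :
    ρ 1 ≤ ρ 0 := by
  have hmem : (1:ℤ) ∈ (Finset.Icc (0:ℤ) (N:ℤ)).erase 0 := by
    rw [Finset.mem_erase, Finset.mem_Icc]; omega
  have hE := extract_zero hm hinv
  have hsingle : ρ 1 * Lact N m α (dd 0) 1 ≤
      ∑ x ∈ (Finset.Icc (0:ℤ) (N:ℤ)).erase 0, ρ x * Lact N m α (dd 0) x := by
    refine Finset.single_le_sum (f := fun x => ρ x * Lact N m α (dd 0) x) (fun x hx => ?_) hmem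
    rw [Finset.mem_erase] at hx
    exact mul_nonneg (hρ x hx.2) (Lact_dd_offdiag_nonneg N m α hα 0 x hx.1)
  have hlow : ρ 1 * (((N:ℝ)^2/2) * (∑ k ∈ Finset.Icc 1 m, α k)) ≤ ρ 1 * Lact N m α (dd 0) 1 :=
    mul_le_mul_of_nonneg_left (Lact_dd_lower01 N m α hα hm hN h2m)
      (hρ _ (Finset.mem_of_mem_erase hmem))
  have hr : (0:ℝ) < ((N:ℝ)^2/2) * (∑ k ∈ Finset.Icc 1 m, α k) := by
    have h0 : (0:ℝ) < (N:ℝ) := by exact_mod_cast (by omega : 0 < N)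
    have : (0:ℝ) < ((N:ℝ)^2/2) := by positivity
    exact mul_pos this hApos
  have key : ρ 1 * (((N:ℝ)^2/2) * (∑ k ∈ Finset.Icc 1 m, α k)) ≤
      ρ 0 * (((N:ℝ)^2/2) * (∑ k ∈ Finset.Icc 1 m, α k)) := by
    calc ρ 1 * (((N:ℝ)^2/2) * (∑ k ∈ Finset.Icc 1 m, α k)) ≤ ρ 1 * Lact N m α (dd 0) 1 := hlow
    _ ≤ ∑ x ∈ (Finset.Icc (0:ℤ) (N:ℤ)).erase 0, ρ x * Lact N m α (dd 0) x := hsingle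
    _ = ρ 0 * (((N:ℝ)^2/2) * (∑ k ∈ Finset.Icc 1 m, α k)) := hE.symm
  exact le_of_mul_le_mul_right key hr

lemma endpoint_N (hα : ∀ k ∈ Finset.Icc 1 m, 0 ≤ α k) (hm : 1 ≤ m) (hN : 2 ≤ N)
    (h2m : 2*m ≤ N) (hApos : 0 < ∑ k ∈ Finset.Icc 1 m, α k)
    (hρ : ∀ x ∈ Finset.Icc (0:ℤ) (N:ℤ), 0 ≤ ρ x)
    (hinv : ∀ φ : ℤ → ℝ, ∑ x ∈ Finset.Icc (0:ℤ) (N:ℤ), ρ x * Lact N m α φ x = 0) :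
    ρ ((N:ℤ)-1) ≤ ρ (N:ℤ) := by
  have hmem : (N:ℤ)-1 ∈ (Finset.Icc (0:ℤ) (N:ℤ)).erase (N:ℤ) := by
    rw [Finset.mem_erase, Finset.mem_Icc]; omega
  have hE := extract_N hm h2m hinv
  have hsingle : ρ ((N:ℤ)-1) * Lact N m α (dd N) ((N:ℤ)-1) ≤
      ∑ x ∈ (Finset.Icc (0:ℤ) (N:ℤ)).erase (N:ℤ), ρ x * Lact N m α (dd N) x := by
    refine Finset.single_le_sum (f := fun x => ρ x * Lact N m α (dd (N:ℤ)) x) (fun x hx => ?_) hmem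
    rw [Finset.mem_erase] at hx
    exact mul_nonneg (hρ x hx.2) (Lact_dd_offdiag_nonneg N m α hα N x hx.1)
  have hlow : ρ ((N:ℤ)-1) * (((N:ℝ)^2/2) * (∑ k ∈ Finset.Icc 1 m, α k)) ≤
      ρ ((N:ℤ)-1) * Lact N m α (dd N) ((N:ℤ)-1) :=
    mul_le_mul_of_nonneg_left (Lact_dd_lowerN N m α hα hm hN h2m)
      (hρ _ (Finset.mem_of_mem_erase hmem))
  have hr : (0:ℝ) < ((N:ℝ)^2/2) * (∑ k ∈ Finset.Icc 1 m, α k) := by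
    have h0 : (0:ℝ) < (N:ℝ) := by exact_mod_cast (by omega : 0 < N)
    have : (0:ℝ) < ((N:ℝ)^2/2) := by positivity
    exact mul_pos this hApos
  have key : ρ ((N:ℤ)-1) * (((N:ℝ)^2/2) * (∑ k ∈ Finset.Icc 1 m, α k)) ≤
      ρ (N:ℤ) * (((N:ℝ)^2/2) * (∑ k ∈ Finset.Icc 1 m, α k)) := by
    calc ρ ((N:ℤ)-1) * (((N:ℝ)^2/2) * (∑ k ∈ Finset.Icc 1 m, α k))
        ≤ ρ ((N:ℤ)-1) * Lact N m α (dd N) ((N:ℤ)-1) := hlow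
    _ ≤ ∑ x ∈ (Finset.Icc (0:ℤ) (N:ℤ)).erase (N:ℤ), ρ x * Lact N m α (dd N) x := hsingle
    _ = ρ (N:ℤ) * (((N:ℝ)^2/2) * (∑ k ∈ Finset.Icc 1 m, α k)) := hE.symm
  exact le_of_mul_le_mul_right key hr

end derived

section maxstep
variable {N m : ℕ} {α : ℕ → ℝ} {ρ : ℤ → ℝ}

lemma row_bound (hα : ∀ k ∈ Finset.Icc 1 m, 0 ≤ α k) (hN : 2 ≤ N)
    (y : ℤ) (h1 : 1 ≤ y) (h2 : y ≤ (N:ℤ) - 1) (s : Finset ℤ) :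
    ∑ x ∈ s, Lact N m α (dd y) x ≤ ((N:ℝ)^2/2) * (2 * ∑ k ∈ Finset.Icc 1 m, α k) := by
  have step1 : ∑ x ∈ s, Lact N m α (dd y) x ≤
      ∑ x ∈ s, ((N:ℝ)^2/2) * ∑ k ∈ Finset.Icc 1 m,
        α k * ((if x = y - (k:ℤ) then 1 else 0) + (if x = y + (k:ℤ) then 1 else 0)) :=
    Finset.sum_le_sum fun x _ => Lact_dd_upper N m α hα y x h1 h2
  refine le_trans step1 ?_
  rw [← Finset.mul_sum]
  refine mul_le_mul_of_nonneg_left ?_ (by positivity)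
  rw [Finset.sum_comm]
  have step2 : ∀ k ∈ Finset.Icc 1 m,
      (∑ x ∈ s, α k * ((if x = y - (k:ℤ) then 1 else 0) + (if x = y + (k:ℤ) then 1 else 0)))
        ≤ α k * 2 := by
    intro k hk
    rw [← Finset.mul_sum]
    refine mul_le_mul_of_nonneg_left ?_ (hα k hk)
    rw [Finset.sum_add_distrib, Finset.sum_ite_eq' s (y - (k:ℤ)) (fun _ => (1:ℝ)),
      Finset.sum_ite_eq' s (y + (k:ℤ)) (fun _ => (1:ℝ))]
    split_ifs <;> norm_num
  calc ∑ k ∈ Finset.Icc 1 m, ∑ x ∈ s,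
        α k * ((if x = y - (k:ℤ) then 1 else 0) + (if x = y + (k:ℤ) then 1 else 0))
      ≤ ∑ k ∈ Finset.Icc 1 m, α k * 2 := Finset.sum_le_sum step2
    _ = 2 * ∑ k ∈ Finset.Icc 1 m, α k := by rw [← Finset.sum_mul]; ring

lemma max_step (hα : ∀ k ∈ Finset.Icc 1 m, 0 ≤ α k) (hm : 1 ≤ m) (hN : 2 ≤ N)
    (hα1 : 0 < α 1)
    (hρ : ∀ x ∈ Finset.Icc (0:ℤ) (N:ℤ), 0 ≤ ρ x)
    (hinv : ∀ φ : ℤ → ℝ, ∑ x ∈ Finset.Icc (0:ℤ) (N:ℤ), ρ x * Lact N m α φ x = 0)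
    (M : ℝ) (hM : ∀ x ∈ Finset.Icc (0:ℤ) (N:ℤ), ρ x ≤ M) (hM0 : 0 ≤ M)
    (y : ℤ) (h1 : 1 ≤ y) (h2 : y ≤ (N:ℤ) - 1) (hy : ρ y = M) :
    ρ (y-1) = M := by
  set r : ℝ := ((N:ℝ)^2/2) with hrdef
  set A : ℝ := ∑ k ∈ Finset.Icc 1 m, α k with hAdef
  set S : Finset ℤ := (Finset.Icc (0:ℤ) (N:ℤ)).erase y with hSdef
  set w : ℤ → ℝ := fun x => Lact N m α (dd y) x with hwdef
  have hrpos : (0:ℝ) < r := by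
    have : (0:ℝ) < (N:ℝ) := by exact_mod_cast (by omega : 0 < N)
    rw [hrdef]; positivity
  have hmemI : y - 1 ∈ Finset.Icc (0:ℤ) (N:ℤ) := Finset.mem_Icc.mpr (by omega)
  have hmem : y - 1 ∈ S := by rw [hSdef, Finset.mem_erase]; exact ⟨by omega, hmemI⟩
  have hE : ρ y * (r * (2 * A)) = ∑ x ∈ S, ρ x * w x := extract_interior hinv y h1 h2
  have hsplit : ρ (y-1) * w (y-1) + ∑ x ∈ S.erase (y-1), ρ x * w x = ∑ x ∈ S, ρ x * w x :=
    Finset.add_sum_erase S (fun x => ρ x * w x) hmem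
  have hwsplit : w (y-1) + ∑ x ∈ S.erase (y-1), w x = ∑ x ∈ S, w x :=
    Finset.add_sum_erase S w hmem
  have hrow : ∑ x ∈ S, w x ≤ r * (2 * A) := row_bound hα hN y h1 h2 S
  have hbound : ∑ x ∈ S.erase (y-1), ρ x * w x ≤ M * ∑ x ∈ S.erase (y-1), w x := by
    rw [Finset.mul_sum]
    refine Finset.sum_le_sum fun x hx => ?_
    have hx' := Finset.mem_of_mem_erase hx
    have hxI := Finset.mem_of_mem_erase hx'
    have hxy : x ≠ y := (Finset.mem_erase.mp hx').1
    exact mul_le_mul_of_nonneg_right (hM x hxI) (Lact_dd_offdiag_nonneg N m α hα y x hxy)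
  have hwlow : r * α 1 ≤ w (y-1) := Lact_dd_lower_sub N m α hα hm y h1 h2
  have hρle : ρ (y-1) ≤ M := hM _ hmemI
  -- combine
  have hchain : M * (r * (2*A)) ≤ ρ (y-1) * w (y-1) + M * (r * (2*A)) - M * w (y-1) := by
    have e1 : M * (r * (2*A)) = ρ y * (r * (2*A)) := by rw [hy]
    have e2 : ∑ x ∈ S.erase (y-1), w x ≤ r * (2*A) - w (y-1) := by linarith
    have e3 : M * ∑ x ∈ S.erase (y-1), w x ≤ M * (r * (2*A) - w (y-1)) :=
      mul_le_mul_of_nonneg_left e2 hM0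
    have e4 : ρ y * (r * (2*A)) = ρ (y-1) * w (y-1) + ∑ x ∈ S.erase (y-1), ρ x * w x := by
      rw [hE, ← hsplit]
    nlinarith [hbound]
  have hkey : M * w (y-1) ≤ ρ (y-1) * w (y-1) := by linarith
  by_contra hne
  have hlt : ρ (y-1) < M := lt_of_le_of_ne hρle hne
  have hwpos : 0 < w (y-1) := lt_of_lt_of_le (mul_pos hrpos hα1) hwlow
  nlinarith [mul_lt_mul_of_pos_right hlt hwpos]

end maxstep

section spread
variable {N m : ℕ} {α : ℕ → ℝ} {ρ : ℤ → ℝ}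

lemma pos_all (hα : ∀ k ∈ Finset.Icc 1 m, 0 ≤ α k) (hm : 1 ≤ m) (hN : 2 ≤ N)
    (h2m : 2*m ≤ N) (hα1 : 0 < α 1)
    (hρ : ∀ x ∈ Finset.Icc (0:ℤ) (N:ℤ), 0 ≤ ρ x)
    (hinv : ∀ φ : ℤ → ℝ, ∑ x ∈ Finset.Icc (0:ℤ) (N:ℤ), ρ x * Lact N m α φ x = 0)
    (x₀ : ℤ) (hx₀I : x₀ ∈ Finset.Icc (0:ℤ) (N:ℤ)) (hx₀ : 0 < ρ x₀) :
    ∀ x ∈ Finset.Icc (0:ℤ) (N:ℤ), 0 < ρ x := by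
  have hApos : (0:ℝ) < ∑ k ∈ Finset.Icc 1 m, α k := by
    refine lt_of_lt_of_le hα1 ?_
    exact Finset.single_le_sum (fun k hk => hα k hk) (Finset.mem_Icc.mpr ⟨le_refl 1, hm⟩)
  have hx₀b := Finset.mem_Icc.mp hx₀I
  have step_up : ∀ y : ℤ, 1 ≤ y → y ≤ (N:ℤ) → 0 < ρ (y-1) → 0 < ρ y := by
    intro y hy1 hyN hpos
    rcases eq_or_lt_of_le hyN with hEq | hLt
    · subst hEq
      have := endpoint_N hα hm hN h2m hApos hρ hinv
      linarith
    · have h := spread_sub hα hm hρ hinv hN y hy1 (by omega)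
      nlinarith [mul_pos hpos hα1]
  have step_down : ∀ y : ℤ, 0 ≤ y → y ≤ (N:ℤ) - 1 → 0 < ρ (y+1) → 0 < ρ y := by
    intro y hy0 hyN hpos
    rcases eq_or_lt_of_le hy0 with hEq | hLt
    · subst hEq
      have := endpoint_zero hα hm hN h2m hApos hρ hinv
      norm_num at hpos
      linarith
    · have h := spread_add hα hm hρ hinv hN y (by omega) hyN
      nlinarith [mul_pos hpos hα1]
  have hup : ∀ j : ℕ, x₀ + (j:ℤ) ≤ (N:ℤ) → 0 < ρ (x₀ + (j:ℤ)) := by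
    intro j
    induction j with
    | zero => intro _; simpa using hx₀
    | succ j ih =>
      intro hle
      have hj : x₀ + ((j:ℤ)+1) - 1 = x₀ + (j:ℤ) := by ring
      have : 0 < ρ (x₀ + ((j:ℤ)+1) - 1) := by
        rw [hj]; exact ih (by push_cast at hle ⊢; omega)
      push_cast
      exact step_up (x₀ + ((j:ℤ)+1)) (by omega) (by push_cast at hle; omega) this
  have hdown : ∀ j : ℕ, 0 ≤ x₀ - (j:ℤ) → 0 < ρ (x₀ - (j:ℤ)) := by
    intro j
    induction j with
    | zero => intro _; simpa using hx₀
    | succ j ih =>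
      intro hle
      have hj : x₀ - ((j:ℤ)+1) + 1 = x₀ - (j:ℤ) := by ring
      have : 0 < ρ (x₀ - ((j:ℤ)+1) + 1) := by
        rw [hj]; exact ih (by push_cast at hle ⊢; omega)
      push_cast
      exact step_down (x₀ - ((j:ℤ)+1)) (by push_cast at hle; omega) (by omega) this
  intro x hxI
  have hxb := Finset.mem_Icc.mp hxI
  rcases le_total x₀ x with hle | hle
  · have := hup (x - x₀).toNat (by omega)
    rwa [show x₀ + ((x - x₀).toNat : ℤ) = x by omega] at this
  · have := hdown (x₀ - x).toNat (by omega)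
    rwa [show x₀ - ((x₀ - x).toNat : ℤ) = x by omega] at this

end spread

section reflect
variable {N m : ℕ} {α : ℕ → ℝ}

lemma sum_reflect (N : ℕ) (f : ℤ → ℝ) :
    ∑ x ∈ Finset.Icc (0:ℤ) (N:ℤ), f ((N:ℤ) - x) = ∑ x ∈ Finset.Icc (0:ℤ) (N:ℤ), f x := by
  refine Finset.sum_nbij' (i := fun x => (N:ℤ) - x) (j := fun x => (N:ℤ) - x) ?_ ?_ ?_ ?_ ?_
  · intro a ha; simp only [Finset.mem_Icc] at *; constructor <;> omega
  · intro a ha; simp only [Finset.mem_Icc] at *; constructor <;> omega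
  · intro a _; ring
  · intro a _; ring
  · intro a _; simp only []

lemma Lact_reflect (hm : 1 ≤ m) (h2m : 2*m ≤ N) (φ : ℤ → ℝ) (x : ℤ)
    (hx0 : 0 ≤ x) (hxN : x ≤ (N:ℤ)) :
    Lact N m α (fun u => φ ((N:ℤ) - u)) x = Lact N m α φ ((N:ℤ) - x) := by
  unfold Lact
  by_cases h1 : (m:ℤ) ≤ x ∧ x ≤ (N:ℤ) - (m:ℤ)
  · rw [if_pos h1, if_pos (by omega)]
    congr 1
    refine Finset.sum_congr rfl fun k hk => ?_
    simp only []
    rw [show (N:ℤ) - (x + (k:ℤ)) = (N:ℤ) - x - (k:ℤ) by ring,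
      show (N:ℤ) - (x - (k:ℤ)) = (N:ℤ) - x + (k:ℤ) by ring]
    ring
  · by_cases h2 : 0 ≤ x ∧ x ≤ (m:ℤ) - 1
    · rw [if_neg h1, if_pos h2, if_neg (by omega), if_neg (by omega)]
      congr 1
      refine Finset.sum_congr rfl fun k hk => ?_
      simp only []
      rw [show (N:ℤ) - (x + (k:ℤ)) = (N:ℤ) - x - (k:ℤ) by ring,
        show (N:ℤ) - (x - min (k:ℤ) x) = (N:ℤ) - x + min (k:ℤ) x by ring,
        show (N:ℤ) - ((N:ℤ) - x) = x by ring]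
      try ring
    · rw [if_neg h1, if_neg h2, if_neg (by omega), if_pos (by omega)]
      congr 1
      refine Finset.sum_congr rfl fun k hk => ?_
      simp only []
      rw [show (N:ℤ) - (x - (k:ℤ)) = (N:ℤ) - x + (k:ℤ) by ring,
        show (N:ℤ) - (x + min (k:ℤ) ((N:ℤ) - x)) = (N:ℤ) - x - min (k:ℤ) ((N:ℤ) - x) by ring]
      try ring

end reflect

/-- There is a constant `κ > 0` depending only on `c, C₀` such that any nonnegative
invariant function `π` satisfies
`max_{0≤x≤m−1} π_x ≤ π_0 ≤ κ^m · min_{0≤x≤m−1} π_x`, the mirror estimate at the right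
boundary block, and `π_0 = π_N`. -/
theorem invariant_measure_boundary_estimate (c C₀ : ℝ) (hc : 0 < c) (hC₀ : 0 < C₀) :
    ∃ κ : ℝ, 0 < κ ∧
      ∀ (N m : ℕ) (α : ℕ → ℝ), 1 ≤ m → 2 ≤ N → 2 * m ≤ N →
        (∀ k ∈ Finset.Icc 1 m, 0 ≤ α k) → c ≤ α 1 →
        (∑ k ∈ Finset.Icc 1 m, α k) ≤ C₀ →
        ∀ π : ℤ → ℝ,
          (∀ x ∈ Finset.Icc (0 : ℤ) (N : ℤ), 0 ≤ π x) →
          (∀ φ : ℤ → ℝ, ∑ x ∈ Finset.Icc (0 : ℤ) (N : ℤ), π x * Lact N m α φ x = 0) →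
          (∀ x ∈ Finset.Icc (0 : ℤ) ((m : ℤ) - 1), π x ≤ π 0) ∧
          (∀ x ∈ Finset.Icc (0 : ℤ) ((m : ℤ) - 1), π 0 ≤ κ ^ m * π x) ∧
          (∀ x ∈ Finset.Icc ((N : ℤ) - (m : ℤ) + 1) (N : ℤ), π x ≤ π (N : ℤ)) ∧
          (∀ x ∈ Finset.Icc ((N : ℤ) - (m : ℤ) + 1) (N : ℤ), π (N : ℤ) ≤ κ ^ m * π x) ∧
          π 0 = π (N : ℤ) := by
  refine ⟨1 + 2*C₀/c, by positivity, ?_⟩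
  intro N m α hm hN h2m hα hα1 hAC π hπ hinv
  set κ : ℝ := 1 + 2*C₀/c with hκdef
  have hκ1 : (1:ℝ) ≤ κ := by
    have h : 0 < 2*C₀/c := by positivity
    rw [hκdef]; linarith
  have hcκ : c * κ = c + 2*C₀ := by rw [hκdef]; field_simp
  have hκ0 : (0:ℝ) ≤ κ := by linarith
  clear_value κ
  have hα1pos : 0 < α 1 := lt_of_lt_of_le hc hα1
  have hApos : (0:ℝ) < ∑ k ∈ Finset.Icc 1 m, α k := by
    refine lt_of_lt_of_le hα1pos ?_
    exact Finset.single_le_sum (fun k hk => hα k hk) (Finset.mem_Icc.mpr ⟨le_refl 1, hm⟩)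
  have hmem0 : (0:ℤ) ∈ Finset.Icc (0:ℤ) (N:ℤ) := Finset.mem_Icc.mpr (by omega)
  have hmemN : (N:ℤ) ∈ Finset.Icc (0:ℤ) (N:ℤ) := Finset.mem_Icc.mpr (by omega)
  by_cases hzero : ∀ x ∈ Finset.Icc (0:ℤ) (N:ℤ), π x = 0
  · have h0 : π 0 = 0 := hzero 0 hmem0
    have hNz : π (N:ℤ) = 0 := hzero (N:ℤ) hmemN
    have hsub : ∀ x ∈ Finset.Icc (0:ℤ) ((m:ℤ)-1), π x = 0 := fun x hx => by
      refine hzero x (Finset.mem_Icc.mpr ?_)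
      rw [Finset.mem_Icc] at hx; omega
    have hsub' : ∀ x ∈ Finset.Icc ((N:ℤ)-(m:ℤ)+1) (N:ℤ), π x = 0 := fun x hx => by
      refine hzero x (Finset.mem_Icc.mpr ?_)
      rw [Finset.mem_Icc] at hx; omega
    refine ⟨fun x hx => by rw [h0, hsub x hx], fun x hx => by rw [h0, hsub x hx]; simp,
      fun x hx => by rw [hNz, hsub' x hx], fun x hx => by rw [hNz, hsub' x hx]; simp,
      by rw [h0, hNz]⟩
  · push_neg at hzero
    obtain ⟨x₀, hx₀I, hx₀ne⟩ := hzero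
    have hx₀pos : 0 < π x₀ := lt_of_le_of_ne (hπ x₀ hx₀I) (Ne.symm hx₀ne)
    have hpos : ∀ x ∈ Finset.Icc (0:ℤ) (N:ℤ), 0 < π x :=
      pos_all hα hm hN h2m hα1pos hπ hinv x₀ hx₀I hx₀pos
    -- reflected measure is invariant
    have hinv' : ∀ φ : ℤ → ℝ,
        ∑ x ∈ Finset.Icc (0:ℤ) (N:ℤ), π ((N:ℤ) - x) * Lact N m α φ x = 0 := by
      intro φ
      have e1 : ∑ x ∈ Finset.Icc (0:ℤ) (N:ℤ), π ((N:ℤ) - x) * Lact N m α φ x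
          = ∑ x ∈ Finset.Icc (0:ℤ) (N:ℤ), π x * Lact N m α φ ((N:ℤ) - x) := by
        rw [← sum_reflect N (fun z => π z * Lact N m α φ ((N:ℤ) - z))]
        refine Finset.sum_congr rfl fun x _ => ?_
        rw [show (N:ℤ) - ((N:ℤ) - x) = x by ring]
      rw [e1]
      have e2 : ∑ x ∈ Finset.Icc (0:ℤ) (N:ℤ), π x * Lact N m α φ ((N:ℤ) - x)
          = ∑ x ∈ Finset.Icc (0:ℤ) (N:ℤ), π x * Lact N m α (fun u => φ ((N:ℤ) - u)) x := by
        refine Finset.sum_congr rfl fun x hx => ?_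
        rw [Finset.mem_Icc] at hx
        rw [Lact_reflect hm h2m φ x hx.1 hx.2]
      rw [e2]
      exact hinv (fun u => φ ((N:ℤ) - u))
    -- uniqueness: reflected measure proportional, factor 1
    obtain ⟨xs, hxsI, hxsmin⟩ := Finset.exists_min_image (Finset.Icc (0:ℤ) (N:ℤ))
      (fun x => π ((N:ℤ) - x) / π x) ⟨0, hmem0⟩
    set t : ℝ := π ((N:ℤ) - xs) / π xs with htdef
    have hxsb := Finset.mem_Icc.mp hxsI
    have hxsI' : (N:ℤ) - xs ∈ Finset.Icc (0:ℤ) (N:ℤ) := Finset.mem_Icc.mpr (by omega)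
    have htpos : 0 < t := div_pos (hpos _ hxsI') (hpos _ hxsI)
    clear_value t
    have hρ2 : ∀ x ∈ Finset.Icc (0:ℤ) (N:ℤ), 0 ≤ π ((N:ℤ) - x) - t * π x := by
      intro x hx
      have h := hxsmin x hx
      have hx0 : 0 < π x := hpos x hx
      have h2 := (le_div_iff₀ hx0).mp h
      linarith
    have hinv2 : ∀ φ : ℤ → ℝ,
        ∑ x ∈ Finset.Icc (0:ℤ) (N:ℤ), (π ((N:ℤ) - x) - t * π x) * Lact N m α φ x = 0 := by
      intro φ
      have : ∑ x ∈ Finset.Icc (0:ℤ) (N:ℤ), (π ((N:ℤ) - x) - t * π x) * Lact N m α φ x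
          = (∑ x ∈ Finset.Icc (0:ℤ) (N:ℤ), π ((N:ℤ) - x) * Lact N m α φ x)
            - t * ∑ x ∈ Finset.Icc (0:ℤ) (N:ℤ), π x * Lact N m α φ x := by
        rw [Finset.mul_sum, ← Finset.sum_sub_distrib]
        refine Finset.sum_congr rfl fun x _ => by ring
      rw [this, hinv' φ, hinv φ]
      ring
    have hts : π ((N:ℤ) - xs) - t * π xs = 0 := by
      have h := div_mul_cancel₀ (π ((N:ℤ) - xs)) (ne_of_gt (hpos _ hxsI))
      rw [htdef]
      linarith [h]
    have hEq : ∀ x ∈ Finset.Icc (0:ℤ) (N:ℤ), π ((N:ℤ) - x) = t * π x := by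
      intro x hx
      by_contra hne
      have hgt : 0 < π ((N:ℤ) - x) - t * π x := lt_of_le_of_ne (hρ2 x hx) (by
        intro h; exact hne (by linarith [h.symm]))
      have := pos_all hα hm hN h2m hα1pos hρ2 hinv2 x hx hgt xs hxsI
      rw [hts] at this
      exact lt_irrefl 0 this
    have ht1 : t = 1 := by
      have h1 : π ((N:ℤ) - x₀) = t * π x₀ := hEq x₀ hx₀I
      have hx₀b := Finset.mem_Icc.mp hx₀I
      have hx₀I' : (N:ℤ) - x₀ ∈ Finset.Icc (0:ℤ) (N:ℤ) := Finset.mem_Icc.mpr (by omega)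
      have h2 : π ((N:ℤ) - ((N:ℤ) - x₀)) = t * π ((N:ℤ) - x₀) := hEq _ hx₀I'
      rw [show (N:ℤ) - ((N:ℤ) - x₀) = x₀ by ring, h1] at h2
      have h3 : (t*t - 1) * π x₀ = 0 := by linear_combination -h2
      rcases mul_eq_zero.mp h3 with h4 | h4
      · have h5 : (t-1)*(t+1) = 0 := by linear_combination h4
        rcases mul_eq_zero.mp h5 with h6 | h6
        · linarith
        · linarith
      · exact absurd h4 (ne_of_gt hx₀pos)
    have hsym : ∀ x ∈ Finset.Icc (0:ℤ) (N:ℤ), π ((N:ℤ) - x) = π x := by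
      intro x hx; rw [hEq x hx, ht1, one_mul]
    have hsym0 : π 0 = π (N:ℤ) := by
      have := hsym 0 hmem0
      norm_num at this
      exact this.symm
    -- global maximum is at 0
    obtain ⟨y₀, hy₀I, hy₀max⟩ := Finset.exists_max_image (Finset.Icc (0:ℤ) (N:ℤ)) π
      ⟨0, hmem0⟩
    set M : ℝ := π y₀ with hMdef
    have hM0 : 0 ≤ M := le_of_lt (hpos y₀ hy₀I)
    have descend : ∀ n : ℕ, ∀ y : ℤ, y = (n:ℤ) → y ≤ (N:ℤ) - 1 → π y = M → π 0 = M := by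
      intro n
      induction n with
      | zero => intro y hy _ hπy; rw [← hπy, hy]; norm_num
      | succ n ih =>
        intro y hy hyN hπy
        have h1 : 1 ≤ y := by omega
        have hstep : π (y - 1) = M :=
          max_step hα hm hN hα1pos hπ hinv M hy₀max hM0 y h1 hyN hπy
        exact ih (y-1) (by omega) (by omega) hstep
    have hy₀b := Finset.mem_Icc.mp hy₀I
    have hmax0 : π 0 = M := by
      rcases eq_or_lt_of_le hy₀b.2 with hEqN | hLtN
      · rw [hsym0, ← hEqN]
      · exact descend y₀.toNat y₀ (by omega) (by omega) rfl
    -- chain lower bound on the left block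
    have chain : ∀ j : ℕ, (j:ℤ) ≤ (m:ℤ) - 1 → π 0 ≤ κ^j * π (j:ℤ) := by
      intro j
      induction j with
      | zero => intro _; norm_num
      | succ j ih =>
        intro hj
        push_cast
        have hj' : (j:ℤ) ≤ (m:ℤ) - 1 := by push_cast at hj ⊢; omega
        have hIH := ih hj'
        have hy1 : (1:ℤ) ≤ (j:ℤ) + 1 := by omega
        have hyN : (j:ℤ) + 1 ≤ (N:ℤ) - 1 := by push_cast at hj; omega
        have hspread := spread_sub hα hm hπ hinv hN ((j:ℤ)+1) hy1 hyN
        rw [show (j:ℤ) + 1 - 1 = (j:ℤ) by ring] at hspread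
        have hπj1 : 0 ≤ π ((j:ℤ)+1) := hπ _ (Finset.mem_Icc.mpr (by omega))
        have hπj0 : 0 ≤ π (j:ℤ) := hπ _ (Finset.mem_Icc.mpr (by omega))
        have hstep : π (j:ℤ) ≤ κ * π ((j:ℤ)+1) := by
          have s1 : α 1 * π (j:ℤ) ≤ 2*C₀ * π ((j:ℤ)+1) := by
            nlinarith [hspread, mul_nonneg (sub_nonneg.mpr hAC) hπj1]
          have s2 : c * π (j:ℤ) ≤ 2*C₀ * π ((j:ℤ)+1) := by
            nlinarith [mul_le_mul_of_nonneg_right hα1 hπj0]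
          have e2 : c * (κ * π ((j:ℤ)+1)) = (c + 2*C₀) * π ((j:ℤ)+1) := by
            rw [← hcκ]; ring
          have s3 : c * π (j:ℤ) ≤ c * (κ * π ((j:ℤ)+1)) := by
            rw [e2]
            nlinarith [mul_nonneg (le_of_lt hc) hπj1]
          exact le_of_mul_le_mul_left s3 hc
        calc π 0 ≤ κ^j * π (j:ℤ) := hIH
          _ ≤ κ^j * (κ * π ((j:ℤ)+1)) :=
            mul_le_mul_of_nonneg_left hstep (pow_nonneg hκ0 j)
          _ = κ^(j+1) * π ((j:ℤ)+1) := by ring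
    -- final claims
    have claim1 : ∀ x ∈ Finset.Icc (0:ℤ) ((m:ℤ)-1), π x ≤ π 0 := by
      intro x hx
      rw [Finset.mem_Icc] at hx
      rw [hmax0]
      exact hy₀max x (Finset.mem_Icc.mpr (by omega))
    have claim2 : ∀ x ∈ Finset.Icc (0:ℤ) ((m:ℤ)-1), π 0 ≤ κ ^ m * π x := by
      intro x hx
      rw [Finset.mem_Icc] at hx
      have hxt : ((x.toNat : ℤ)) = x := Int.toNat_of_nonneg hx.1
      have h1 := chain x.toNat (by omega)
      rw [hxt] at h1
      refine le_trans h1 ?_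
      have hπx : 0 ≤ π x := hπ x (Finset.mem_Icc.mpr (by omega))
      have : κ ^ x.toNat ≤ κ ^ m := pow_le_pow_right₀ hκ1 (by omega)
      exact mul_le_mul_of_nonneg_right this hπx
    have claim3 : ∀ x ∈ Finset.Icc ((N:ℤ)-(m:ℤ)+1) (N:ℤ), π x ≤ π (N:ℤ) := by
      intro x hx
      rw [Finset.mem_Icc] at hx
      rw [← hsym0, hmax0]
      exact hy₀max x (Finset.mem_Icc.mpr (by omega))
    have claim4 : ∀ x ∈ Finset.Icc ((N:ℤ)-(m:ℤ)+1) (N:ℤ), π (N:ℤ) ≤ κ ^ m * π x := by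
      intro x hx
      rw [Finset.mem_Icc] at hx
      have hmem : (N:ℤ) - x ∈ Finset.Icc (0:ℤ) ((m:ℤ)-1) := Finset.mem_Icc.mpr (by omega)
      have h1 := claim2 ((N:ℤ) - x) hmem
      have h2 : π ((N:ℤ) - ((N:ℤ) - x)) = π ((N:ℤ) - x) :=
        hsym ((N:ℤ) - x) (Finset.mem_Icc.mpr (by omega))
      rw [show (N:ℤ) - ((N:ℤ) - x) = x by ring] at h2
      rw [← h2] at h1
      rw [← hsym0]
      exact h1
    exact ⟨claim1, claim2, claim3, claim4, hsym0⟩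
end
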